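/- arXiv:2306.14166 — 4 statements merged into one kernel-verified Lean document; each statement's English description precedes it below -/
import Mathlib

section
/- The integral I₁ := ∫_{−∞}^{∞} [ e^{−y²}/(√π · erfc(y)) − χ_{(0,∞)}(y) · ( y + y/(2(1+y²)) ) ] dy converges and equals (1/2) log(2√π). -/
open Real MeasureTheory Set Filter Topology

/-- The complementary error function `erfc(y) = (2/√π) ∫_y^∞ e^{-t²} dt`. -/
noncomputable def erfc (y : ℝ) : ℝ :=
  (2 / Real.sqrt π) * ∫ t in Set.Ioi y, Real.exp (-t ^ 2)

namespace I1Aux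

noncomputable def f (t : ℝ) : ℝ := Real.exp (-t ^ 2)
noncomputable def I (y : ℝ) : ℝ := ∫ t in Ioi y, f t

lemma f_pos (t : ℝ) : 0 < f t := Real.exp_pos _
lemma f_cont : Continuous f := by unfold f; continuity

lemma f_integrable : Integrable f := by
  have h := integrable_exp_neg_mul_sq (b := 1) one_pos
  unfold f; simpa [f, neg_mul, one_mul] using h

lemma hasDerivAt_f (t : ℝ) : HasDerivAt f (-2 * t * f t) t := by
  have h : HasDerivAt (fun t : ℝ => -t ^ 2) (-(2 * t)) t := by
    simpa using ((hasDerivAt_pow 2 t).fun_neg)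
  have := h.exp
  refine this.congr_deriv (Eq.symm ?_)
  · simp [f]; ring

lemma I_pos (y : ℝ) : 0 < I y := by
  rw [I, setIntegral_pos_iff_support_of_nonneg_ae]
  · have : Function.support f = univ := by
      ext t; simp [Function.mem_support, (f_pos t).ne']
    rw [this, univ_inter]
    simp [Real.volume_Ioi]
  · exact Filter.Eventually.of_forall fun t => (f_pos t).le
  · exact f_integrable.integrableOn

lemma integral_f : ∫ t, f t = Real.sqrt π := by
  have := integral_gaussian 1
  simpa [f, neg_mul, one_mul] using this

lemma I_zero : I 0 = Real.sqrt π / 2 := by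
  have := integral_gaussian_Ioi 1
  simpa [I, f, neg_mul, one_mul] using this

lemma I_eq (y : ℝ) : I y = Real.sqrt π - ∫ t in Iic y, f t := by
  rw [← integral_f, ← intervalIntegral.integral_Iic_add_Ioi f_integrable.integrableOn f_integrable.integrableOn, I]
  ring

lemma hasDerivAt_I (y : ℝ) : HasDerivAt I (-(f y)) y := by
  have key : ∀ z : ℝ, I z = (Real.sqrt π - ∫ t in Iic 0, f t) - ∫ t in (0:ℝ)..z, f t := by
    intro z
    rw [I_eq]
    have := intervalIntegral.integral_Iic_sub_Iic (f_integrable.integrableOn (s := Iic 0))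
      (f_integrable.integrableOn (s := Iic z))
    rw [intervalIntegral.integral_symm] at this ⊢
    linarith [this]
  have hd : HasDerivAt (fun z => ∫ t in (0:ℝ)..z, f t) (f y) y :=
    intervalIntegral.integral_hasDerivAt_right f_integrable.intervalIntegrable
      (f_cont.stronglyMeasurableAtFilter _ _) f_cont.continuousAt
  have h2 := hd.const_sub (Real.sqrt π - ∫ t in Iic 0, f t)
  have : I = fun z => (Real.sqrt π - ∫ t in Iic 0, f t) - ∫ t in (0:ℝ)..z, f t := funext key
  rw [this]
  convert h2 using 1


lemma tendsto_f_atTop : Tendsto f atTop (𝓝 0) := by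
  have h1 : Tendsto (fun t : ℝ => -t ^ 2) atTop atBot := by
    exact tendsto_neg_atBot_iff.2 (tendsto_pow_atTop (by norm_num))
  exact Real.tendsto_exp_atBot.comp h1

lemma integral_t_mul (y : ℝ) (hy : 0 < y) :
    ∫ t in Ioi y, t * f t = f y / 2 := by
  have hderiv : ∀ t ∈ Ici y, HasDerivAt (fun t => -f t / 2) (t * f t) t := by
    intro t _
    have := ((hasDerivAt_f t).neg).div_const 2
    refine this.congr_deriv (Eq.symm ?_)
    ring
  have hpos : ∀ t ∈ Ioi y, 0 ≤ t * f t := fun t ht =>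
    mul_nonneg (le_of_lt (lt_trans hy ht)) (f_pos t).le
  have htend : Tendsto (fun t => -f t / 2) atTop (𝓝 0) := by
    have := (tendsto_f_atTop.neg).div_const 2
    simpa using this
  have := integral_Ioi_of_hasDerivAt_of_nonneg' hderiv hpos htend
  rw [this]; ring

lemma integrable_t_mul (y : ℝ) (hy : 0 < y) :
    IntegrableOn (fun t => t * f t) (Ioi y) := by
  have hderiv : ∀ t ∈ Ici y, HasDerivAt (fun t => -f t / 2) (t * f t) t := by
    intro t _
    have := ((hasDerivAt_f t).neg).div_const 2
    refine this.congr_deriv (Eq.symm ?_)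
    ring
  have hpos : ∀ t ∈ Ioi y, 0 ≤ t * f t := fun t ht =>
    mul_nonneg (le_of_lt (lt_trans hy ht)) (f_pos t).le
  have htend : Tendsto (fun t => -f t / 2) atTop (𝓝 0) := by
    have := (tendsto_f_atTop.neg).div_const 2
    simpa using this
  exact integrableOn_Ioi_deriv_of_nonneg' hderiv hpos htend

lemma I_upper {y : ℝ} (hy : 0 < y) : I y ≤ f y / (2 * y) := by
  have hmono : I y ≤ ∫ t in Ioi y, (t / y) * f t := by
    apply setIntegral_mono_on f_integrable.integrableOn
    · have h := (integrable_t_mul y hy).div_const y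
      exact h.congr (Filter.Eventually.of_forall fun t => by ring)
    · exact measurableSet_Ioi
    · intro t ht
      have h1 : 1 ≤ t / y := (one_le_div hy).2 (le_of_lt ht)
      nlinarith [f_pos t, f_pos t]
  have heq : ∫ t in Ioi y, (t / y) * f t = f y / (2 * y) := by
    have : ∀ t, (t / y) * f t = (1 / y) * (t * f t) := fun t => by ring
    simp_rw [this]
    rw [integral_const_mul, integral_t_mul y hy]
    have hy0 : y ≠ 0 := ne_of_gt hy
    field_simp
  linarith [hmono, heq.le, heq.ge]

lemma I_lower {y : ℝ} (hy : 1 ≤ y) :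
    f y * (1 / (2 * y) - 1 / (4 * y ^ 3)) ≤ I y := by
  set g' : ℝ → ℝ := fun t => f t * (1 - 3 / (4 * t ^ 4)) with hg'
  have hderiv : ∀ t ∈ Ici y, HasDerivAt
      (fun t => -(f t * (1 / (2 * t) - 1 / (4 * t ^ 3)))) (g' t) t := by
    intro t ht
    have ht0 : t ≠ 0 := by
      have : (1:ℝ) ≤ t := le_trans hy ht
      linarith
    have hu : HasDerivAt (fun t : ℝ => 1 / (2 * t) - 1 / (4 * t ^ 3))
        (-1 / (2 * t ^ 2) + 3 / (4 * t ^ 4)) t := by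
      have h1 : HasDerivAt (fun t : ℝ => 1 / (2 * t)) (-2 / (2 * t) ^ 2) t := by
        have := ((hasDerivAt_id t).const_mul 2).inv (by simpa using ht0)
        simpa [one_div, Pi.inv_def] using this
      have h2 : HasDerivAt (fun t : ℝ => 1 / (4 * t ^ 3)) (-(4 * (3 * t ^ 2)) / (4 * t ^ 3) ^ 2) t := by
        have := ((hasDerivAt_pow 3 t).const_mul 4).inv (by positivity)
        simpa [one_div, Pi.inv_def] using this
      have := h1.sub h2
      refine this.congr_deriv (Eq.symm ?_)
      field_simp
      ring
    have := ((hasDerivAt_f t).mul hu).neg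
    refine this.congr_deriv (Eq.symm ?_)
    rw [hg']
    field_simp
    ring
  have hpos : ∀ t ∈ Ioi y, 0 ≤ g' t := by
    intro t ht
    have ht1 : (1:ℝ) ≤ t := le_trans hy (le_of_lt ht)
    have : 3 / (4 * t ^ 4) ≤ 1 := by
      rw [div_le_one (by positivity)]
      nlinarith [ht1, sq_nonneg t, sq_nonneg (t * t - 1)]
    have := f_pos t
    rw [hg']
    nlinarith
  have htend : Tendsto (fun t => -(f t * (1 / (2 * t) - 1 / (4 * t ^ 3)))) atTop (𝓝 0) := by
    have h1 : Tendsto (fun t : ℝ => 1 / (2 * t) - 1 / (4 * t ^ 3)) atTop (𝓝 0) := by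
      have a1 : Tendsto (fun t : ℝ => 1 / (2 * t)) atTop (𝓝 0) := by
        apply Tendsto.div_atTop tendsto_const_nhds
        exact (tendsto_id.const_mul_atTop two_pos)
      have a2 : Tendsto (fun t : ℝ => 1 / (4 * t ^ 3)) atTop (𝓝 0) := by
        apply Tendsto.div_atTop tendsto_const_nhds
        exact ((tendsto_pow_atTop (n := 3) (by norm_num)).const_mul_atTop four_pos)
      simpa using a1.sub a2
    have := (tendsto_f_atTop.mul h1).neg
    simpa using this
  have hval := integral_Ioi_of_hasDerivAt_of_nonneg' hderiv hpos htend
  have hint := integrableOn_Ioi_deriv_of_nonneg' hderiv hpos htend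
  have hmono : ∫ t in Ioi y, g' t ≤ I y := by
    apply setIntegral_mono_on hint f_integrable.integrableOn measurableSet_Ioi
    intro t ht
    have := f_pos t
    have ht1 : (1:ℝ) ≤ t := le_trans hy (le_of_lt ht)
    rw [hg']
    have h3 : 0 ≤ 3 / (4 * t ^ 4) := by positivity
    nlinarith
  rw [hval] at hmono
  have hy0 : y ≠ 0 := by linarith
  calc f y * (1 / (2 * y) - 1 / (4 * y ^ 3))
      = 0 - -(f y * (1 / (2 * y) - 1 / (4 * y ^ 3))) := by ring
    _ ≤ I y := hmono

lemma I_atTop : Tendsto I atTop (𝓝 0) := by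
  have hb : Tendsto (fun y : ℝ => 1 / (2 * y)) atTop (𝓝 0) :=
    Tendsto.div_atTop tendsto_const_nhds (tendsto_id.const_mul_atTop two_pos)
  refine tendsto_of_tendsto_of_tendsto_of_le_of_le' tendsto_const_nhds hb ?_ ?_
  · exact Filter.Eventually.of_forall fun y => (I_pos y).le
  · filter_upwards [eventually_ge_atTop (1:ℝ)] with y hy
    have h1 := I_upper (lt_of_lt_of_le one_pos hy)
    have h2 : f y ≤ 1 := by
      rw [f]
      have : -y ^ 2 ≤ 0 := by nlinarith
      simpa using Real.exp_le_one_iff.2 this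
    have hy0 : (0:ℝ) < 2 * y := by linarith
    calc I y ≤ f y / (2 * y) := h1
      _ ≤ 1 / (2 * y) := by gcongr

lemma Iic_eq (y : ℝ) : ∫ t in Iic y, f t = I (-y) := by
  rw [I, ← integral_comp_neg_Iic]
  apply setIntegral_congr_fun measurableSet_Iic
  intro t _
  simp [f]

lemma I_atBot : Tendsto I atBot (𝓝 (Real.sqrt π)) := by
  have h : ∀ y, I y = Real.sqrt π - I (-y) := fun y => by rw [I_eq, Iic_eq]
  have h2 : Tendsto (fun y : ℝ => Real.sqrt π - I (-y)) atBot (𝓝 (Real.sqrt π - 0)) := by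
    apply Tendsto.const_sub
    exact I_atTop.comp tendsto_neg_atBot_atTop
  rw [show (𝓝 (Real.sqrt π)) = 𝓝 (Real.sqrt π - 0) by norm_num]
  exact h2.congr (fun y => (h y).symm)


noncomputable def h (y : ℝ) : ℝ := y + y / (2 * (1 + y ^ 2))
noncomputable def hd (y : ℝ) : ℝ := 1 + (1 - y ^ 2) / (2 * (1 + y ^ 2) ^ 2)

lemma one_add_sq_pos (y : ℝ) : (0:ℝ) < 1 + y ^ 2 := by positivity

lemma hasDerivAt_h (y : ℝ) : HasDerivAt h (hd y) y := by
  have hne : 2 * (1 + y ^ 2) ≠ 0 := by positivity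
  have hden : HasDerivAt (fun y : ℝ => 2 * (1 + y ^ 2)) (2 * (2 * y ^ 1)) y :=
    (((hasDerivAt_pow 2 y)).const_add 1).const_mul 2
  have hq := (hasDerivAt_id y).div hden hne
  have := (hasDerivAt_id y).add hq
  refine this.congr_deriv (Eq.symm ?_)
  rw [hd]
  field_simp
  simp only [id]; ring

lemma h_pos {y : ℝ} (hy : 0 < y) : 0 < h y := by
  have := one_add_sq_pos y
  rw [h]; positivity

lemma h_ge {y : ℝ} (hy : 0 ≤ y) : y ≤ h y := by
  have := one_add_sq_pos y
  rw [h]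
  have : 0 ≤ y / (2 * (1 + y ^ 2)) := by positivity
  linarith

lemma key_ineq {y : ℝ} (hy : 0 < y) : 2 * h y ^ 2 - 2 * y * h y - hd y ≤ 0 := by
  have h1 : (0:ℝ) < 1 + y ^ 2 := one_add_sq_pos y
  rw [h, hd]
  have hne : (1 + y ^ 2) ≠ 0 := ne_of_gt h1
  have e : y + y / (2 * (1 + y ^ 2)) = (2 * y * (1 + y ^ 2) + y) / (2 * (1 + y ^ 2)) := by
    field_simp
  have e2 : 2 * ((2 * y * (1 + y ^ 2) + y) / (2 * (1 + y ^ 2))) ^ 2 -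
      2 * y * ((2 * y * (1 + y ^ 2) + y) / (2 * (1 + y ^ 2))) -
      (1 + (1 - y ^ 2) / (2 * (1 + y ^ 2) ^ 2)) = -3 / (2 * (1 + y ^ 2) ^ 2) := by
    field_simp
    ring
  rw [e, e2]
  have : (0:ℝ) < 2 * (1 + y ^ 2) ^ 2 := by positivity
  exact div_nonpos_of_nonpos_of_nonneg (by norm_num) this.le

noncomputable def φ (y : ℝ) : ℝ := f y / h y - 2 * I y

lemma hasDerivAt_φ {y : ℝ} (hy : 0 < y) :
    HasDerivAt φ (f y * ((2 * h y ^ 2 - 2 * y * h y - hd y) / h y ^ 2)) y := by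
  have hne : h y ≠ 0 := ne_of_gt (h_pos hy)
  have h1 := (hasDerivAt_f y).div (hasDerivAt_h y) hne
  have h2 := (hasDerivAt_I y).const_mul 2
  have := h1.sub h2
  refine this.congr_deriv (Eq.symm ?_)
  field_simp
  ring

lemma φ_tendsto : Tendsto φ atTop (𝓝 0) := by
  have h1 : Tendsto (fun y => f y / h y) atTop (𝓝 0) := by
    refine tendsto_of_tendsto_of_tendsto_of_le_of_le' tendsto_const_nhds tendsto_f_atTop ?_ ?_
    · filter_upwards [eventually_gt_atTop (0:ℝ)] with y hy
      exact div_nonneg (f_pos y).le (h_pos hy).le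
    · filter_upwards [eventually_ge_atTop (1:ℝ)] with y hy
      have hy0 : (0:ℝ) < y := lt_of_lt_of_le one_pos hy
      have h2 : 1 ≤ h y := le_trans hy (h_ge hy0.le)
      calc f y / h y ≤ f y / 1 := by gcongr; exact f_pos y |>.le
        _ = f y := by ring
  have h2 : Tendsto (fun y => 2 * I y) atTop (𝓝 0) := by
    have := I_atTop.const_mul 2
    simpa using this
  have := h1.sub h2
  unfold φ; simpa [φ] using this

lemma φ_nonneg {y : ℝ} (hy : 0 < y) : 0 ≤ φ y := by
  have hderiv : ∀ z ∈ Ici y, HasDerivAt (fun z => -φ z)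
      (-(f z * ((2 * h z ^ 2 - 2 * z * h z - hd z) / h z ^ 2))) z := by
    intro z hz
    exact (hasDerivAt_φ (lt_of_lt_of_le hy hz)).neg
  have hpos : ∀ z ∈ Ioi y, 0 ≤ -(f z * ((2 * h z ^ 2 - 2 * z * h z - hd z) / h z ^ 2)) := by
    intro z hz
    have hz0 : 0 < z := lt_trans hy hz
    have hk := key_ineq hz0
    have hf := (f_pos z).le
    have hh2 : (0:ℝ) < h z ^ 2 := pow_pos (h_pos hz0) 2
    rw [neg_nonneg]
    apply mul_nonpos_of_nonneg_of_nonpos hf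
    exact div_nonpos_of_nonpos_of_nonneg hk (le_of_lt hh2)
  have htend : Tendsto (fun z => -φ z) atTop (𝓝 0) := by
    have := φ_tendsto.neg; simpa using this
  have hval := integral_Ioi_of_hasDerivAt_of_nonneg' hderiv hpos htend
  have hge : 0 ≤ ∫ z in Ioi y, -(f z * ((2 * h z ^ 2 - 2 * z * h z - hd z) / h z ^ 2)) :=
    setIntegral_nonneg measurableSet_Ioi hpos
  rw [hval] at hge
  linarith

lemma deriv_nonneg {y : ℝ} (hy : 0 < y) : 0 ≤ f y / (2 * I y) - h y := by
  have hφ := φ_nonneg hy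
  have hI := I_pos y
  have hh := h_pos hy
  rw [φ] at hφ
  have h1 : 2 * I y ≤ f y / h y := by linarith
  have h2 : 2 * I y * h y ≤ f y := by
    rw [← le_div_iff₀ hh]; exact h1
  have : h y ≤ f y / (2 * I y) := by
    rw [le_div_iff₀ (by positivity)]
    linarith [h2]
  linarith


noncomputable def G (y : ℝ) : ℝ :=
  -(1/2) * Real.log (2 * I y) - y ^ 2 / 2 - (1/4) * Real.log (1 + y ^ 2)

lemma twoI_pos (y : ℝ) : (0:ℝ) < 2 * I y := by linarith [I_pos y]

lemma hasDerivAt_log2I (y : ℝ) :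
    HasDerivAt (fun y => -(1/2) * Real.log (2 * I y)) (f y / (2 * I y)) y := by
  have l1 : HasDerivAt (fun y => 2 * I y) (2 * -(f y)) y := (hasDerivAt_I y).const_mul 2
  have l2 := (l1.log (ne_of_gt (twoI_pos y))).const_mul (-(1/2 : ℝ))
  refine l2.congr_deriv (Eq.symm ?_)
  have := (twoI_pos y).ne'
  field_simp

lemma hasDerivAt_G (y : ℝ) : HasDerivAt G (f y / (2 * I y) - h y) y := by
  have l3 := hasDerivAt_log2I y
  have m1 : HasDerivAt (fun y : ℝ => y ^ 2 / 2) ((2 * y ^ 1) / 2) y :=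
    (hasDerivAt_pow 2 y).div_const 2
  have p1 : HasDerivAt (fun y : ℝ => 1 + y ^ 2) (2 * y ^ 1) y :=
    (hasDerivAt_pow 2 y).const_add 1
  have p3 := (p1.log (ne_of_gt (one_add_sq_pos y))).const_mul (1/4 : ℝ)
  have := (l3.sub m1).sub p3
  refine this.congr_deriv (Eq.symm ?_)
  have := (one_add_sq_pos y).ne'
  rw [h]
  field_simp
  ring

lemma G_atTop : Tendsto G atTop (𝓝 0) := by
  set L : ℝ → ℝ := fun y => 2 * I y * Real.exp (y ^ 2) * Real.sqrt (1 + y ^ 2) with hL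
  have hhi : Tendsto (fun y : ℝ => Real.sqrt (1 / y ^ 2 + 1)) atTop (𝓝 1) := by
    have h1 : Tendsto (fun y : ℝ => 1 / y ^ 2 + 1) atTop (𝓝 (0 + 1)) := by
      apply Tendsto.add_const
      exact Tendsto.div_atTop tendsto_const_nhds (tendsto_pow_atTop (by norm_num))
    have := (Real.continuous_sqrt.tendsto (0 + 1)).comp h1
    simpa [Function.comp_def] using this
  have heq : ∀ y : ℝ, 1 ≤ y → Real.sqrt (1 + y ^ 2) / y = Real.sqrt (1 / y ^ 2 + 1) := by
    intro y hy
    have hy0 : (0:ℝ) < y := lt_of_lt_of_le one_pos hy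
    rw [show 1 / y ^ 2 + 1 = (1 + y ^ 2) / y ^ 2 by field_simp]
    rw [Real.sqrt_div (by positivity), Real.sqrt_sq hy0.le]
  have hLlim : Tendsto L atTop (𝓝 1) := by
    have hlo : Tendsto (fun y : ℝ => (1 - 1 / (2 * y ^ 2)) * Real.sqrt (1 / y ^ 2 + 1))
        atTop (𝓝 ((1 - 0) * 1)) := by
      apply Tendsto.mul _ hhi
      apply Tendsto.const_sub
      exact Tendsto.div_atTop tendsto_const_nhds
        ((tendsto_pow_atTop (by norm_num)).const_mul_atTop two_pos)
    rw [show ((1:ℝ) - 0) * 1 = 1 by norm_num] at hlo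
    refine tendsto_of_tendsto_of_tendsto_of_le_of_le' hlo hhi ?_ ?_
    · filter_upwards [eventually_ge_atTop (1:ℝ)] with y hy
      have hy0 : (0:ℝ) < y := lt_of_lt_of_le one_pos hy
      have hIl := I_lower hy
      have hfe : f y * Real.exp (y ^ 2) = 1 := by
        rw [f, ← Real.exp_add]; simp
      have hs : (0:ℝ) ≤ Real.sqrt (1 + y ^ 2) := Real.sqrt_nonneg _
      have he : (0:ℝ) < Real.exp (y ^ 2) := Real.exp_pos _
      have key : f y * (1 / y - 1 / (2 * y ^ 3)) ≤ 2 * I y := by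
        have e : f y * (1 / y - 1 / (2 * y ^ 3)) = 2 * (f y * (1 / (2 * y) - 1 / (4 * y ^ 3))) := by
          ring
        rw [e]; linarith
      have step : (1 / y - 1 / (2 * y ^ 3)) * Real.sqrt (1 + y ^ 2) ≤ L y := by
        rw [hL]
        have h3 : (1 / y - 1 / (2 * y ^ 3)) * Real.sqrt (1 + y ^ 2)
            = f y * (1 / y - 1 / (2 * y ^ 3)) * Real.exp (y ^ 2) * Real.sqrt (1 + y ^ 2) := by
          rw [show f y * (1 / y - 1 / (2 * y ^ 3)) * Real.exp (y ^ 2)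
              = (1 / y - 1 / (2 * y ^ 3)) * (f y * Real.exp (y ^ 2)) by ring, hfe, mul_one]
        rw [h3]
        apply mul_le_mul_of_nonneg_right _ hs
        apply mul_le_mul_of_nonneg_right _ he.le
        exact key
      calc (1 - 1 / (2 * y ^ 2)) * Real.sqrt (1 / y ^ 2 + 1)
          = (1 / y - 1 / (2 * y ^ 3)) * Real.sqrt (1 + y ^ 2) := by
            rw [← heq y hy]
            field_simp
        _ ≤ L y := step
    · filter_upwards [eventually_ge_atTop (1:ℝ)] with y hy
      have hy0 : (0:ℝ) < y := lt_of_lt_of_le one_pos hy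
      have hIu := I_upper hy0
      have hfe : f y * Real.exp (y ^ 2) = 1 := by
        rw [f, ← Real.exp_add]; simp
      have hs : (0:ℝ) ≤ Real.sqrt (1 + y ^ 2) := Real.sqrt_nonneg _
      have he : (0:ℝ) < Real.exp (y ^ 2) := Real.exp_pos _
      have step : L y ≤ Real.sqrt (1 + y ^ 2) / y := by
        rw [hL]
        have h1 : 2 * I y ≤ f y / y := by
          have e : f y / (2 * y) = f y / y / 2 := by ring
          rw [e] at hIu; linarith
        calc 2 * I y * Real.exp (y ^ 2) * Real.sqrt (1 + y ^ 2)
            ≤ (f y / y) * Real.exp (y ^ 2) * Real.sqrt (1 + y ^ 2) := by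
              apply mul_le_mul_of_nonneg_right _ hs
              exact mul_le_mul_of_nonneg_right h1 he.le
          _ = Real.sqrt (1 + y ^ 2) / y := by
              rw [div_mul_eq_mul_div, div_mul_eq_mul_div, hfe]
              ring
      rw [← heq y hy]
      exact step
  -- now G y = -(1/2) * log (L y) eventually
  have hGL : ∀ᶠ y in atTop, -(1/2) * Real.log (L y) = G y := by
    filter_upwards [eventually_ge_atTop (1:ℝ)] with y hy
    have h2I := twoI_pos y
    have he : (0:ℝ) < Real.exp (y ^ 2) := Real.exp_pos _
    have hsp : (0:ℝ) < Real.sqrt (1 + y ^ 2) := Real.sqrt_pos.2 (one_add_sq_pos y)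
    rw [hL]
    rw [Real.log_mul (by positivity) hsp.ne', Real.log_mul h2I.ne' he.ne',
      Real.log_exp, Real.log_sqrt (one_add_sq_pos y).le, G]
    ring
  have hlog : Tendsto (fun y => -(1/2 : ℝ) * Real.log (L y)) atTop (𝓝 (-(1/2) * Real.log 1)) :=
    (hLlim.log one_ne_zero).const_mul _
  rw [Real.log_one, mul_zero] at hlog
  exact hlog.congr' hGL

lemma G_zero : G 0 = -(1/2) * Real.log (Real.sqrt π) := by
  rw [G, I_zero, show (2:ℝ) * (Real.sqrt π / 2) = Real.sqrt π by ring]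
  norm_num

lemma integrableOn_Ioi_main :
    IntegrableOn (fun y => f y / (2 * I y) - h y) (Ioi 0) := by
  apply integrableOn_Ioi_deriv_of_nonneg' (g := G)
  · intro y _; exact hasDerivAt_G y
  · intro y hy; exact deriv_nonneg hy
  · exact G_atTop

lemma integral_Ioi_main :
    ∫ y in Ioi 0, (f y / (2 * I y) - h y) = (1/2) * Real.log (Real.sqrt π) := by
  have := integral_Ioi_of_hasDerivAt_of_nonneg' (g := G) (l := 0)
    (fun y _ => hasDerivAt_G y) (fun y hy => deriv_nonneg hy) G_atTop
  rw [this, G_zero]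
  ring

lemma sqrt_pi_pos : (0:ℝ) < Real.sqrt π := Real.sqrt_pos.2 pi_pos

lemma I_mono {y : ℝ} (hy : y ≤ 0) : Real.sqrt π ≤ 2 * I y := by
  have h0 : I 0 ≤ I y := by
    rw [I, I]
    apply setIntegral_mono_set f_integrable.integrableOn
    · exact Filter.Eventually.of_forall fun t => (f_pos t).le
    · exact HasSubset.Subset.eventuallyLE (Ioi_subset_Ioi hy)
  rw [I_zero] at h0
  linarith

lemma cont_main : Continuous (fun y => f y / (2 * I y)) := by
  apply f_cont.div
  · apply Continuous.mul continuous_const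
    rw [continuous_iff_continuousAt]
    exact fun y => (hasDerivAt_I y).differentiableAt.continuousAt
  · exact fun y => (twoI_pos y).ne'

lemma integrableOn_Iic_main :
    IntegrableOn (fun y => f y / (2 * I y)) (Iic 0) := by
  apply Integrable.mono' ((f_integrable.div_const (Real.sqrt π)).integrableOn (s := Iic 0))
    cont_main.aestronglyMeasurable.restrict
  rw [ae_restrict_iff' measurableSet_Iic]
  apply ae_of_all
  intro y hy
  have h1 := I_mono hy
  have h2 := twoI_pos y
  rw [Real.norm_eq_abs, abs_of_nonneg (div_nonneg (f_pos y).le (twoI_pos y).le)]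
  rw [div_le_div_iff₀ h2 sqrt_pi_pos]
  nlinarith [f_pos y]
  
lemma integral_Iic_main :
    ∫ y in Iic 0, f y / (2 * I y) = (1/2) * Real.log 2 := by
  have htend : Tendsto (fun y => -(1/2 : ℝ) * Real.log (2 * I y)) atBot
      (𝓝 (-(1/2) * Real.log (2 * Real.sqrt π))) := by
    have h1 : Tendsto (fun y => 2 * I y) atBot (𝓝 (2 * Real.sqrt π)) := I_atBot.const_mul 2
    exact (h1.log (mul_pos two_pos sqrt_pi_pos).ne').const_mul _
  have := integral_Iic_of_hasDerivAt_of_tendsto' (f := fun y => -(1/2 : ℝ) * Real.log (2 * I y))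
    (fun y _ => hasDerivAt_log2I y) integrableOn_Iic_main htend
  rw [this]
  rw [I_zero, show (2:ℝ) * (Real.sqrt π / 2) = Real.sqrt π by ring,
    Real.log_mul two_ne_zero sqrt_pi_pos.ne']
  ring


lemma erfc_eq (y : ℝ) : Real.sqrt π * erfc y = 2 * I y := by
  unfold erfc I f
  have hs : Real.sqrt π ≠ 0 := sqrt_pi_pos.ne'
  field_simp

lemma eqOn_Iic : EqOn (fun y => f y / (2 * I y))
    (fun y : ℝ => Real.exp (-y ^ 2) / (Real.sqrt π * erfc y) -
      Set.indicator (Set.Ioi (0 : ℝ)) (fun y => y + y / (2 * (1 + y ^ 2))) y) (Iic 0) := by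
  intro y hy
  have : y ∉ Set.Ioi (0:ℝ) := by simp only [mem_Ioi, not_lt]; exact hy
  simp only [Set.indicator_of_notMem this, sub_zero, erfc_eq]
  rfl

lemma eqOn_Ioi : EqOn (fun y => f y / (2 * I y) - h y)
    (fun y : ℝ => Real.exp (-y ^ 2) / (Real.sqrt π * erfc y) -
      Set.indicator (Set.Ioi (0 : ℝ)) (fun y => y + y / (2 * (1 + y ^ 2))) y) (Ioi 0) := by
  intro y hy
  simp only [Set.indicator_of_mem hy, erfc_eq]
  rfl

end I1Aux

open I1Aux in
theorem integral_I1 :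
    Integrable (fun y : ℝ => Real.exp (-y ^ 2) / (Real.sqrt π * erfc y) -
      Set.indicator (Set.Ioi (0 : ℝ)) (fun y => y + y / (2 * (1 + y ^ 2))) y) ∧
    (∫ y : ℝ, (Real.exp (-y ^ 2) / (Real.sqrt π * erfc y) -
      Set.indicator (Set.Ioi (0 : ℝ)) (fun y => y + y / (2 * (1 + y ^ 2))) y)) =
      (1 / 2) * Real.log (2 * Real.sqrt π) := by
  have hIic := integrableOn_Iic_main.congr_fun eqOn_Iic measurableSet_Iic
  have hIoi := integrableOn_Ioi_main.congr_fun eqOn_Ioi measurableSet_Ioi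
  constructor
  · rw [← integrableOn_univ, ← Iic_union_Ioi (a := (0:ℝ))]
    exact hIic.union hIoi
  · rw [← intervalIntegral.integral_Iic_add_Ioi hIic hIoi]
    have e1 := (setIntegral_congr_fun (μ := volume) measurableSet_Iic eqOn_Iic).symm
    have e2 := (setIntegral_congr_fun (μ := volume) measurableSet_Ioi eqOn_Ioi).symm
    rw [e1, e2, integral_Iic_main, integral_Ioi_main,
      Real.log_mul two_ne_zero sqrt_pi_pos.ne']
    ring
end

section
/- The integrals I := ∫_{−∞}^{∞} [ y e^{−y²}/(√π erfc(y)) − χ_{(0,∞)}(y)(y² + 1/2) ] dy and I₃ := ∫_{−∞}^{∞} [ ( e^{−y²}/(√π erfc(y)) )² − χ_{(0,∞)}(y)(y² + 1) ] dy both converge, and I₃ = I. -/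
open Real MeasureTheory Set Filter


noncomputable def E (y : ℝ) : ℝ := ∫ t in Set.Ioi y, Real.exp (-t ^ 2)

lemma integrable_gauss : Integrable (fun t : ℝ => Real.exp (-t ^ 2)) := by
  simpa using integrable_exp_neg_mul_sq (one_pos)

lemma intE (y : ℝ) : IntegrableOn (fun t : ℝ => Real.exp (-t ^ 2)) (Set.Ioi y) :=
  integrable_gauss.integrableOn

lemma E_pos (y : ℝ) : 0 < E y := by
  rw [E, setIntegral_pos_iff_support_of_nonneg_ae]
  · have : (Function.support fun t : ℝ => Real.exp (-t ^ 2)) = Set.univ := by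
      ext t; simp [Function.mem_support, (Real.exp_pos _).ne']
    rw [this]
    simpa using measure_Ioi_pos (volume : Measure ℝ) y  -- guess
  · exact Filter.Eventually.of_forall fun t => (Real.exp_pos _).le
  · exact (intE y)

lemma E_antitone : Antitone E := by
  intro a b hab
  exact setIntegral_mono_set (intE a) (Filter.Eventually.of_forall fun t => (Real.exp_pos _).le)
    (Filter.Eventually.of_forall (Ioi_subset_Ioi hab))

lemma E_eq (y : ℝ) : E y = E 0 - ∫ t in (0:ℝ)..y, Real.exp (-t ^ 2) := by
  have h : ∀ a b : ℝ, a ≤ b → E a = (∫ t in Set.Ioc a b, Real.exp (-t ^ 2)) + E b := by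
    intro a b hab
    rw [E, E, ← setIntegral_union _ measurableSet_Ioi ((intE a).mono Ioc_subset_Ioi_self le_rfl) (intE b),
      Ioc_union_Ioi_eq_Ioi hab]
    rw [Set.disjoint_left]; intro t ht ht'; exact (ht.2.trans_lt ht').false.elim
  rcases le_total 0 y with hy | hy
  · rw [intervalIntegral.integral_of_le hy, h 0 y hy]; ring
  · rw [intervalIntegral.integral_of_ge hy, h y 0 hy]; ring

lemma hasDerivAt_E (y : ℝ) : HasDerivAt E (-Real.exp (-y ^ 2)) y := by
  have h1 : HasDerivAt (fun y : ℝ => ∫ t in (0:ℝ)..y, Real.exp (-t ^ 2)) (Real.exp (-y ^ 2)) y := by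
    refine intervalIntegral.integral_hasDerivAt_right integrable_gauss.intervalIntegrable
      ?_ (by continuity : Continuous fun t : ℝ => Real.exp (-t ^ 2)).continuousAt
    exact (by continuity : Continuous fun t : ℝ => Real.exp (-t ^ 2)).stronglyMeasurableAtFilter _ _
  have h2 : HasDerivAt (fun x => E 0 - ∫ t in (0:ℝ)..x, Real.exp (-t ^ 2)) (-Real.exp (-y ^ 2)) y := by
    simpa using h1.const_sub (E 0)
  exact h2.congr_of_eventuallyEq (Filter.Eventually.of_forall fun x => E_eq x)

lemma continuous_E : Continuous E :=
  continuous_iff_continuousAt.2 fun y => (hasDerivAt_E y).continuousAt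

lemma tendsto_E_atTop : Tendsto E atTop (nhds 0) := by
  have h := intervalIntegral_tendsto_integral_Ioi 0 (intE 0) tendsto_id
  have : Tendsto (fun y => E 0 - ∫ t in (0:ℝ)..y, Real.exp (-t ^ 2)) atTop (nhds (E 0 - E 0)) :=
    tendsto_const_nhds.sub (by simpa [E] using h)
  simpa using this.congr fun y => (E_eq y).symm

lemma tendsto_exp_neg_sq_atTop : Tendsto (fun t : ℝ => Real.exp (-t ^ 2)) atTop (nhds 0) := by
  apply Real.tendsto_exp_atBot.comp
  exact tendsto_neg_atBot_iff.mpr (tendsto_pow_atTop two_ne_zero)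

lemma E_le_gen {y : ℝ} (F F' : ℝ → ℝ) (hd : ∀ t ∈ Ici y, HasDerivAt F (F' t) t)
    (hint : IntegrableOn F' (Set.Ioi y)) (h0 : Tendsto F atTop (nhds 0))
    (hle : ∀ t ∈ Set.Ioi y, Real.exp (-t ^ 2) ≤ F' t) : E y ≤ -F y := by
  have h := integral_Ioi_of_hasDerivAt_of_tendsto' hd hint h0
  rw [E]
  calc ∫ t in Set.Ioi y, Real.exp (-t ^ 2) ≤ ∫ t in Set.Ioi y, F' t :=
        setIntegral_mono_on (intE y) hint measurableSet_Ioi hle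
    _ = -F y := by rw [h]; ring

lemma E_ge_gen {y : ℝ} (F F' : ℝ → ℝ) (hd : ∀ t ∈ Ici y, HasDerivAt F (F' t) t)
    (hint : IntegrableOn F' (Set.Ioi y)) (h0 : Tendsto F atTop (nhds 0))
    (hle : ∀ t ∈ Set.Ioi y, F' t ≤ Real.exp (-t ^ 2)) : -F y ≤ E y := by
  have h := integral_Ioi_of_hasDerivAt_of_tendsto' hd hint h0
  rw [E]
  calc -F y = ∫ t in Set.Ioi y, F' t := by rw [h]; ring
    _ ≤ ∫ t in Set.Ioi y, Real.exp (-t ^ 2) :=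
        setIntegral_mono_on hint (intE y) measurableSet_Ioi hle

lemma hasDerivAt_gaussexp (t : ℝ) :
    HasDerivAt (fun t : ℝ => Real.exp (-t ^ 2)) (-2 * t * Real.exp (-t ^ 2)) t := by
  have h : HasDerivAt (fun t : ℝ => -t ^ 2) (-(2 * t)) t := by
    exact (hasDerivAt_pow 2 t).neg.congr_deriv (by simp)
  simpa [mul_comm] using h.exp

lemma squeeze_exp_mul {F : ℝ → ℝ} (h : ∀ᶠ t in atTop, |F t| ≤ Real.exp (-t ^ 2)) :
    Tendsto F atTop (nhds 0) := by
  refine tendsto_of_tendsto_of_tendsto_of_le_of_le' (by simpa using tendsto_exp_neg_sq_atTop.neg :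
      Tendsto (fun t : ℝ => -Real.exp (-t ^ 2)) atTop (nhds 0))
    tendsto_exp_neg_sq_atTop ?_ ?_
  · filter_upwards [h] with t ht; linarith [(abs_le.mp ht).1]
  · filter_upwards [h] with t ht; linarith [(abs_le.mp ht).2]

lemma E_le1 {y : ℝ} (hy : 0 < y) : E y ≤ Real.exp (-y ^ 2) / (2 * y) := by
  have h := E_le_gen (y := y) (fun t => -(Real.exp (-t ^ 2) / (2 * y)))
      (fun t => t * Real.exp (-t ^ 2) / y) ?_ ?_ ?_ ?_
  · simpa using h
  · intro t _
    have := ((hasDerivAt_gaussexp t).div_const (2 * y)).neg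
    exact this.congr_deriv (by field_simp)
  · have h1 : Integrable (fun t : ℝ => t * Real.exp (-t ^ 2)) := by
      simpa using integrable_mul_exp_neg_mul_sq one_pos
    exact (h1.div_const y).integrableOn
  · simpa using (tendsto_exp_neg_sq_atTop.div_const (2 * y)).neg
  · intro t ht
    rw [le_div_iff₀ hy]
    nlinarith [Real.exp_pos (-t ^ 2), ht.out]

lemma E_le2 {y : ℝ} (hy : 0 < y) :
    E y ≤ Real.exp (-y ^ 2) * (4 * y ^ 4 - 2 * y ^ 2 + 3) / (8 * y ^ 5) := by
  have h := E_le_gen (y := y) (fun t => -(Real.exp (-t ^ 2) * (4 * t ^ 4 - 2 * t ^ 2 + 3) / (8 * t ^ 5)))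
      (fun t => Real.exp (-t ^ 2) * (8 * t ^ 6 + 15) / (8 * t ^ 6)) ?_ ?_ ?_ ?_
  · simpa using h
  · intro t ht
    have htpos : 0 < t := lt_of_lt_of_le hy ht
    have h1 : HasDerivAt (fun t : ℝ => 4 * t ^ 4 - 2 * t ^ 2 + 3)
        (16 * t ^ 3 - 4 * t) t := by
      have := (((hasDerivAt_pow 4 t).const_mul 4).sub ((hasDerivAt_pow 2 t).const_mul 2)).add_const 3
      exact this.congr_deriv (by ring)
    have h2 : HasDerivAt (fun t : ℝ => 8 * t ^ 5) (40 * t ^ 4) t := by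
      have := (hasDerivAt_pow 5 t).const_mul 8
      exact this.congr_deriv (by ring)
    have := (((hasDerivAt_gaussexp t).mul h1).div h2 (by positivity)).neg
    exact this.congr_deriv (by simp only [Pi.mul_apply]; field_simp; ring)
  · have hmeas : AEStronglyMeasurable
        (fun t : ℝ => Real.exp (-t ^ 2) * (8 * t ^ 6 + 15) / (8 * t ^ 6))
        (volume.restrict (Set.Ioi y)) := by
      refine ContinuousOn.aestronglyMeasurable ?_ measurableSet_Ioi
      refine ContinuousOn.div (by fun_prop) (by fun_prop) ?_
      intro t ht; have : 0 < t := hy.trans ht; positivity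
    have hb : Integrable (fun t : ℝ => (1 + 15 / (8 * y ^ 6)) * Real.exp (-t ^ 2)) := by
      simpa using (integrable_exp_neg_mul_sq one_pos).const_mul (1 + 15 / (8 * y ^ 6))
    refine Integrable.mono' hb.integrableOn hmeas ?_
    rw [ae_restrict_iff' measurableSet_Ioi]
    refine Eventually.of_forall fun t ht => ?_
    have htpos : 0 < t := hy.trans ht
    have hy6 : y ^ 6 ≤ t ^ 6 := by
      exact pow_le_pow_left₀ hy.le ht.le 6
    have he := Real.exp_pos (-t ^ 2)
    rw [Real.norm_eq_abs, abs_of_pos (by positivity)]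
    rw [div_le_iff₀ (by positivity)]
    have hcn : (0:ℝ) ≤ 15 / (8 * y ^ 6) := by positivity
    have hc : 15 / (8 * y ^ 6) * (8 * y ^ 6) = 15 := by field_simp
    have h8 : 15 / (8 * y ^ 6) * (8 * y ^ 6) ≤ 15 / (8 * y ^ 6) * (8 * t ^ 6) :=
      mul_le_mul_of_nonneg_left (by linarith) hcn
    have h15 : (15:ℝ) ≤ 15 / (8 * y ^ 6) * (8 * t ^ 6) := by rw [hc] at h8; exact h8
    nlinarith [mul_nonneg he.le (by linarith : (0:ℝ) ≤ 15 / (8 * y ^ 6) * (8 * t ^ 6) - 15)]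
  · apply squeeze_exp_mul
    filter_upwards [eventually_ge_atTop 1] with t ht
    have ht2 : (1:ℝ) ≤ t ^ 2 := by nlinarith
    have ht45 : t ^ 4 ≤ t ^ 5 := by nlinarith [pow_nonneg (by linarith : (0:ℝ) ≤ t) 4]
    have ht24 : t ^ 2 ≤ t ^ 4 := by nlinarith [sq_nonneg t, sq_nonneg (t^2 - 1)]
    have h1 : 0 ≤ 4 * t ^ 4 - 2 * t ^ 2 + 3 := by nlinarith [sq_nonneg (2 * t ^ 2 - 1)]
    have h2 : 4 * t ^ 4 - 2 * t ^ 2 + 3 ≤ 8 * t ^ 5 := by nlinarith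
    have he := Real.exp_pos (-t ^ 2)
    rw [abs_neg, abs_of_nonneg (by positivity)]
    rw [div_le_iff₀ (by positivity)]
    nlinarith
  · intro t ht
    have htpos : 0 < t := hy.trans ht
    have he := Real.exp_pos (-t ^ 2)
    rw [le_div_iff₀ (by positivity)]
    nlinarith [pow_pos htpos 6]

lemma E_ge1 (y : ℝ) : y * Real.exp (-y ^ 2) / (2 * y ^ 2 + 1) ≤ E y := by
  have h := E_ge_gen (y := y) (fun t => -(t * Real.exp (-t ^ 2) / (2 * t ^ 2 + 1)))
      (fun t => Real.exp (-t ^ 2) * ((2 * t ^ 2 + 1) ^ 2 - 2) / (2 * t ^ 2 + 1) ^ 2) ?_ ?_ ?_ ?_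
  · simpa using h
  · intro t _
    have h1 : HasDerivAt (fun t : ℝ => t * Real.exp (-t ^ 2))
        (1 * Real.exp (-t ^ 2) + t * (-2 * t * Real.exp (-t ^ 2))) t :=
      (hasDerivAt_id' t).mul (hasDerivAt_gaussexp t)
    have h2 : HasDerivAt (fun t : ℝ => 2 * t ^ 2 + 1) (4 * t) t := by
      have := ((hasDerivAt_pow 2 t).const_mul 2).add_const 1
      exact this.congr_deriv (by ring)
    have hne : (2 * t ^ 2 + 1 : ℝ) ≠ 0 := by positivity
    have := ((h1.div h2 hne)).neg
    exact this.congr_deriv (by field_simp; ring)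
  · have hmeas : AEStronglyMeasurable
        (fun t : ℝ => Real.exp (-t ^ 2) * ((2 * t ^ 2 + 1) ^ 2 - 2) / (2 * t ^ 2 + 1) ^ 2)
        (volume.restrict (Set.Ioi y)) := by
      refine ContinuousOn.aestronglyMeasurable ?_ measurableSet_Ioi
      refine ContinuousOn.div (by fun_prop) (by fun_prop) ?_
      intro t _; positivity
    have hb : Integrable (fun t : ℝ => 3 * Real.exp (-t ^ 2)) := by
      simpa using (integrable_exp_neg_mul_sq one_pos).const_mul (3:ℝ)
    refine Integrable.mono' hb.integrableOn hmeas ?_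
    rw [ae_restrict_iff' measurableSet_Ioi]
    refine Eventually.of_forall fun t _ => ?_
    have he := Real.exp_pos (-t ^ 2)
    have hD : (1:ℝ) ≤ 2 * t ^ 2 + 1 := by nlinarith
    rw [Real.norm_eq_abs, abs_div, abs_of_pos (by positivity : (0:ℝ) < (2 * t ^ 2 + 1) ^ 2),
      div_le_iff₀ (by positivity)]
    have habs : |Real.exp (-t ^ 2) * ((2 * t ^ 2 + 1) ^ 2 - 2)|
        ≤ Real.exp (-t ^ 2) * (2 * t ^ 2 + 1) ^ 2 := by
      rw [abs_mul, abs_of_pos he]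
      have : |(2 * t ^ 2 + 1) ^ 2 - 2| ≤ (2 * t ^ 2 + 1) ^ 2 := by
        rw [abs_le]; constructor <;> nlinarith
      nlinarith
    nlinarith [mul_pos he (by positivity : (0:ℝ) < (2 * t ^ 2 + 1) ^ 2)]
  · apply squeeze_exp_mul
    filter_upwards [eventually_ge_atTop 0] with t ht
    have he := Real.exp_pos (-t ^ 2)
    rw [abs_neg, abs_of_nonneg (by positivity)]
    rw [div_le_iff₀ (by positivity)]
    have hq : (0:ℝ) ≤ 2 * t ^ 2 - t + 1 := by nlinarith [sq_nonneg (2 * t - 1)]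
    nlinarith [mul_nonneg he.le hq]
  · intro t _
    have he := Real.exp_pos (-t ^ 2)
    rw [div_le_iff₀ (by positivity)]
    nlinarith

noncomputable def g (y : ℝ) : ℝ := Real.exp (-y ^ 2) / (2 * E y)

lemma g_pos (y : ℝ) : 0 < g y := by
  have := E_pos y; have := Real.exp_pos (-y ^ 2); rw [g]; positivity

lemma continuous_g : Continuous g := by
  refine Continuous.div (by fun_prop) (continuous_const.mul continuous_E) fun y => ?_
  have := E_pos y; positivity

lemma hasDerivAt_g (y : ℝ) : HasDerivAt g (2 * g y ^ 2 - 2 * y * g y) y := by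
  have hne : 2 * E y ≠ 0 := by have := E_pos y; positivity
  have := (hasDerivAt_gaussexp y).div ((hasDerivAt_E y).const_mul 2) hne
  exact this.congr_deriv (by rw [g]; have := E_pos y; field_simp; ring)

lemma g_lb1 {y : ℝ} (hy : 0 < y) : y ≤ g y := by
  have hE := E_pos y
  have h := E_le1 hy
  rw [le_div_iff₀ (by positivity)] at h
  rw [g, le_div_iff₀ (by positivity)]
  nlinarith

lemma g_ub {y : ℝ} (hy : 0 < y) : g y ≤ (2 * y ^ 2 + 1) / (2 * y) := by
  have hE := E_pos y
  have h := E_ge1 y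
  rw [div_le_iff₀ (by positivity)] at h
  rw [g, div_le_div_iff₀ (by positivity) (by positivity)]
  nlinarith

lemma g_lb2 {y : ℝ} (hy : 0 < y) : 4 * y ^ 5 / (4 * y ^ 4 - 2 * y ^ 2 + 3) ≤ g y := by
  have hE := E_pos y
  have hN : (0:ℝ) < 4 * y ^ 4 - 2 * y ^ 2 + 3 := by nlinarith [sq_nonneg (2 * y ^ 2 - 1)]
  have h := E_le2 hy
  rw [le_div_iff₀ (by positivity)] at h
  rw [g, div_le_div_iff₀ (by positivity) (by positivity)]
  nlinarith

lemma g_le_of_nonpos {y : ℝ} (hy : y ≤ 0) : g y ≤ Real.exp (-y ^ 2) / (2 * E 0) := by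
  have h0 := E_pos 0
  have hE := E_pos y
  have h := E_antitone hy
  rw [g]
  apply div_le_div_of_nonneg_left (Real.exp_pos _).le (by positivity)
  linarith

lemma tendsto_exp_neg_sq_atBot : Tendsto (fun y : ℝ => Real.exp (-y ^ 2)) atBot (nhds 0) := by
  apply Real.tendsto_exp_atBot.comp
  apply tendsto_neg_atBot_iff.mpr
  have : Tendsto (fun y : ℝ => (-y) ^ 2) atBot atTop :=
    (tendsto_pow_atTop two_ne_zero).comp tendsto_neg_atBot_atTop
  exact this.congr fun y => by ring

lemma tendsto_g_atBot : Tendsto g atBot (nhds 0) := by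
  have h0 := E_pos 0
  refine tendsto_of_tendsto_of_tendsto_of_le_of_le' tendsto_const_nhds
    (by simpa using tendsto_exp_neg_sq_atBot.div_const (2 * E 0) :
      Tendsto (fun y : ℝ => Real.exp (-y ^ 2) / (2 * E 0)) atBot (nhds 0)) ?_ ?_
  · exact Eventually.of_forall fun y => (g_pos y).le
  · filter_upwards [eventually_le_atBot (0:ℝ)] with y hy using g_le_of_nonpos hy

lemma tendsto_g_sub_atTop : Tendsto (fun y => g y - y) atTop (nhds 0) := by
  have hinv : Tendsto (fun y : ℝ => 1 / (2 * y)) atTop (nhds 0) := by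
    apply Tendsto.div_atTop tendsto_const_nhds
    exact Tendsto.const_mul_atTop two_pos tendsto_id
  refine tendsto_of_tendsto_of_tendsto_of_le_of_le' tendsto_const_nhds hinv ?_ ?_
  · filter_upwards [eventually_gt_atTop (0:ℝ)] with y hy
    linarith [g_lb1 hy]
  · filter_upwards [eventually_gt_atTop (0:ℝ)] with y hy
    have h := g_ub hy
    have : (2 * y ^ 2 + 1) / (2 * y) = y + 1 / (2 * y) := by field_simp
    linarith [this ▸ h]

lemma f1_bound {y : ℝ} (hy : 1 ≤ y) : |y * g y - (y ^ 2 + 1 / 2)| ≤ 2 / y ^ 2 := by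
  have hy0 : 0 < y := lt_of_lt_of_le one_pos hy
  have hN : (0:ℝ) < 4 * y ^ 4 - 2 * y ^ 2 + 3 := by nlinarith [sq_nonneg (2 * y ^ 2 - 1)]
  have hub := g_ub hy0
  rw [le_div_iff₀ (by positivity)] at hub
  have hlb := g_lb2 hy0
  rw [div_le_iff₀ hN] at hlb
  rw [abs_le]
  constructor
  · -- -(2/y^2) ≤ y*g - (y^2+1/2)
    have hiN : 2 * y ^ 2 + 3 / 2 ≤ 2 / y ^ 2 * (4 * y ^ 4 - 2 * y ^ 2 + 3) := by
      rw [div_mul_eq_mul_div, le_div_iff₀ (by positivity : (0:ℝ) < y ^ 2)]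
      nlinarith
    nlinarith [mul_le_mul_of_nonneg_left hlb hy0.le]
  · have h2 : (0:ℝ) < 2 / y ^ 2 := by positivity
    nlinarith

lemma f3_bound {y : ℝ} (hy : 1 ≤ y) : |g y ^ 2 - (y ^ 2 + 1)| ≤ 2 / y ^ 2 := by
  have hy0 : 0 < y := lt_of_lt_of_le one_pos hy
  have hN : (0:ℝ) < 4 * y ^ 4 - 2 * y ^ 2 + 3 := by nlinarith [sq_nonneg (2 * y ^ 2 - 1)]
  have hub := g_ub hy0
  have hg0 := g_pos y
  have hub2 : g y ^ 2 ≤ ((2 * y ^ 2 + 1) / (2 * y)) ^ 2 := by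
    apply pow_le_pow_left₀ hg0.le hub
  rw [div_pow] at hub2
  rw [le_div_iff₀ (by positivity)] at hub2
  have hlb := g_lb2 hy0
  have hlb2 : (4 * y ^ 5 / (4 * y ^ 4 - 2 * y ^ 2 + 3)) ^ 2 ≤ g y ^ 2 :=
    pow_le_pow_left₀ (by positivity) hlb 2
  rw [div_pow, div_le_iff₀ (by positivity)] at hlb2
  rw [abs_le]
  constructor
  · have hquart : (0:ℝ) ≤ 20 * y ^ 8 - 48 * y ^ 6 + 59 * y ^ 4 - 33 * y ^ 2 + 18 := by
      nlinarith [sq_nonneg (5 * y ^ 4 - 6 * y ^ 2), sq_nonneg (302 * y ^ 2 - 165), sq_nonneg y]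
    have hvN : 12 * y ^ 6 + 16 * y ^ 4 - 3 * y ^ 2 + 9 ≤
        2 / y ^ 2 * (4 * y ^ 4 - 2 * y ^ 2 + 3) ^ 2 := by
      rw [div_mul_eq_mul_div, le_div_iff₀ (by positivity : (0:ℝ) < y ^ 2)]
      nlinarith
    nlinarith [hlb2, hvN, mul_pos hN hN]
  · have h2 : (1:ℝ) ≤ y ^ 2 := by nlinarith
    have hinv : 2 / y ^ 2 * y ^ 2 = 2 := by field_simp
    nlinarith [hub2, hinv, mul_pos hy0 hy0]

lemma asm_yg : AEStronglyMeasurable (fun y : ℝ => y * g y) volume :=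
  (continuous_id.mul continuous_g).aestronglyMeasurable

lemma int_Iic_yg : IntegrableOn (fun y : ℝ => y * g y) (Set.Iic 0) := by
  have h0 := E_pos 0
  have hb : Integrable (fun y : ℝ => |y * Real.exp (-y ^ 2)| / (2 * E 0)) := by
    have : Integrable (fun y : ℝ => y * Real.exp (-y ^ 2)) := by
      simpa using integrable_mul_exp_neg_mul_sq one_pos
    exact this.abs.div_const _
  refine Integrable.mono' hb.integrableOn (asm_yg.restrict) ?_
  rw [ae_restrict_iff' measurableSet_Iic]
  refine Eventually.of_forall fun y hy => ?_
  have hg := g_pos y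
  have hgle := g_le_of_nonpos hy
  rw [Real.norm_eq_abs, abs_mul, abs_of_pos hg, abs_mul, abs_of_pos (Real.exp_pos _),
    mul_div_assoc]
  exact mul_le_mul_of_nonneg_left hgle (abs_nonneg y)

lemma int_Iic_gsq : IntegrableOn (fun y : ℝ => g y ^ 2) (Set.Iic 0) := by
  have h0 := E_pos 0
  have hb : Integrable (fun y : ℝ => Real.exp (-y ^ 2) / (2 * E 0) ^ 2) := by
    simpa using (integrable_exp_neg_mul_sq one_pos).div_const ((2 * E 0) ^ 2)
  refine Integrable.mono' hb.integrableOn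
    ((continuous_g.pow 2).aestronglyMeasurable.restrict) ?_
  rw [ae_restrict_iff' measurableSet_Iic]
  refine Eventually.of_forall fun y hy => ?_
  have hg := g_pos y
  have hgle := g_le_of_nonpos hy
  have hexp1 : Real.exp (-y ^ 2) ≤ 1 := by
    rw [Real.exp_le_one_iff]; nlinarith [sq_nonneg y]
  have he := Real.exp_pos (-y ^ 2)
  rw [Real.norm_eq_abs, abs_of_pos (by positivity : (0:ℝ) < g y ^ 2)]
  calc g y ^ 2 ≤ (Real.exp (-y ^ 2) / (2 * E 0)) ^ 2 := pow_le_pow_left₀ hg.le hgle 2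
    _ = Real.exp (-y ^ 2) * Real.exp (-y ^ 2) / (2 * E 0) ^ 2 := by rw [div_pow]; ring
    _ ≤ Real.exp (-y ^ 2) * 1 / (2 * E 0) ^ 2 := by gcongr
    _ = Real.exp (-y ^ 2) / (2 * E 0) ^ 2 := by ring

lemma int_rpow2 : IntegrableOn (fun y : ℝ => 2 / y ^ 2) (Set.Ioi 1) := by
  have h : IntegrableOn (fun y : ℝ => y ^ (-2 : ℝ)) (Set.Ioi 1) :=
    integrableOn_Ioi_rpow_of_lt (by norm_num) one_pos
  refine IntegrableOn.congr_fun (h.const_mul 2) (fun y hy => ?_) measurableSet_Ioi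
  have hy0 : (0:ℝ) < y := lt_trans one_pos hy
  rw [Real.rpow_neg hy0.le, show ((2:ℝ)) = ((2:ℕ):ℝ) by norm_num, Real.rpow_natCast]
  rw [div_eq_mul_inv]

noncomputable def P1 : ℝ → ℝ :=
  fun y => y * g y - Set.indicator (Set.Ioi (0:ℝ)) (fun y => y ^ 2 + 1 / 2) y
noncomputable def P3 : ℝ → ℝ :=
  fun y => g y ^ 2 - Set.indicator (Set.Ioi (0:ℝ)) (fun y => y ^ 2 + 1) y

lemma int_P1 : Integrable P1 := by
  have hasm : AEStronglyMeasurable P1 volume := by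
    refine AEStronglyMeasurable.sub asm_yg ?_
    exact (Measurable.indicator (by fun_prop) measurableSet_Ioi).aestronglyMeasurable
  have h1 : IntegrableOn P1 (Set.Iic 0) := by
    refine int_Iic_yg.congr_fun (fun y hy => ?_) measurableSet_Iic
    rw [P1, Set.indicator_of_notMem (by simpa using hy.out : y ∉ Set.Ioi (0:ℝ)), sub_zero]
  have hcont : Continuous (fun y : ℝ => y * g y - (y ^ 2 + 1 / 2)) := by
    exact (continuous_id.mul continuous_g).sub (by fun_prop)
  have h2 : IntegrableOn P1 (Set.Ioc 0 1) := by
    refine (hcont.integrableOn_Ioc).congr_fun (fun y hy => ?_) measurableSet_Ioc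
    rw [P1, Set.indicator_of_mem (by exact hy.1 : y ∈ Set.Ioi (0:ℝ))]
  have h3 : IntegrableOn P1 (Set.Ioi 1) := by
    refine Integrable.mono' int_rpow2 (hasm.restrict) ?_
    rw [ae_restrict_iff' measurableSet_Ioi]
    refine Eventually.of_forall fun y hy => ?_
    have hmem : y ∈ Set.Ioi (0:ℝ) := lt_trans one_pos hy.out
    rw [P1, Set.indicator_of_mem hmem, Real.norm_eq_abs]
    exact f1_bound hy.out.le
  have h23 : IntegrableOn P1 (Set.Ioi 0) := by
    rw [← Set.Ioc_union_Ioi_eq_Ioi (zero_le_one)]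
    exact h2.union h3
  have := h1.union h23
  rwa [Set.Iic_union_Ioi, integrableOn_univ] at this

lemma int_P3 : Integrable P3 := by
  have hasm : AEStronglyMeasurable P3 volume := by
    refine AEStronglyMeasurable.sub ((continuous_g.pow 2).aestronglyMeasurable) ?_
    exact (Measurable.indicator (by fun_prop) measurableSet_Ioi).aestronglyMeasurable
  have h1 : IntegrableOn P3 (Set.Iic 0) := by
    refine int_Iic_gsq.congr_fun (fun y hy => ?_) measurableSet_Iic
    rw [P3, Set.indicator_of_notMem (by simpa using hy.out : y ∉ Set.Ioi (0:ℝ)), sub_zero]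
  have hcont : Continuous (fun y : ℝ => g y ^ 2 - (y ^ 2 + 1)) := by
    exact (continuous_g.pow 2).sub (by fun_prop)
  have h2 : IntegrableOn P3 (Set.Ioc 0 1) := by
    refine (hcont.integrableOn_Ioc).congr_fun (fun y hy => ?_) measurableSet_Ioc
    rw [P3, Set.indicator_of_mem (by exact hy.1 : y ∈ Set.Ioi (0:ℝ))]
  have h3 : IntegrableOn P3 (Set.Ioi 1) := by
    refine Integrable.mono' int_rpow2 (hasm.restrict) ?_
    rw [ae_restrict_iff' measurableSet_Ioi]
    refine Eventually.of_forall fun y hy => ?_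
    have hmem : y ∈ Set.Ioi (0:ℝ) := lt_trans one_pos hy.out
    rw [P3, Set.indicator_of_mem hmem, Real.norm_eq_abs]
    exact f3_bound hy.out.le
  have h23 : IntegrableOn P3 (Set.Ioi 0) := by
    rw [← Set.Ioc_union_Ioi_eq_Ioi (zero_le_one)]
    exact h2.union h3
  have := h1.union h23
  rwa [Set.Iic_union_Ioi, integrableOn_univ] at this

lemma erfc_eq (y : ℝ) : Real.sqrt π * erfc y = 2 * E y := by
  have h : Real.sqrt π ≠ 0 := (Real.sqrt_pos.mpr Real.pi_pos).ne'
  rw [erfc, E]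
  field_simp

lemma integral_D_eq_zero : ∫ y : ℝ, (P3 y - P1 y) = 0 := by
  have hD : Integrable (fun y => P3 y - P1 y) := int_P3.sub int_P1
  have hIic : ∫ y in Set.Iic (0:ℝ), (P3 y - P1 y) = g 0 / 2 - 0 := by
    rw [setIntegral_congr_fun measurableSet_Iic
      (show Set.EqOn (fun y => P3 y - P1 y) (fun y => g y ^ 2 - y * g y) (Set.Iic 0) by
        intro y hy
        have : y ∉ Set.Ioi (0:ℝ) := by simpa using hy.out
        simp [P1, P3, Set.indicator_of_notMem this])]
    refine integral_Iic_of_hasDerivAt_of_tendsto' (f := fun y => g y / 2) ?_ ?_ ?_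
    · intro x _
      have := (hasDerivAt_g x).div_const 2
      exact this.congr_deriv (by ring)
    · refine (hD.integrableOn).congr_fun (fun y hy => ?_) measurableSet_Iic
      have : y ∉ Set.Ioi (0:ℝ) := by simpa using hy.out
      simp [P1, P3, Set.indicator_of_notMem this]
    · simpa using tendsto_g_atBot.div_const 2
  have hIoi : ∫ y in Set.Ioi (0:ℝ), (P3 y - P1 y) = 0 - (g 0 / 2 - 0 / 2) := by
    rw [setIntegral_congr_fun measurableSet_Ioi
      (show Set.EqOn (fun y => P3 y - P1 y) (fun y => g y ^ 2 - y * g y - 1 / 2) (Set.Ioi 0) by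
        intro y hy
        simp only [P1, P3]
        rw [Set.indicator_of_mem hy, Set.indicator_of_mem hy]
        ring)]
    refine integral_Ioi_of_hasDerivAt_of_tendsto' (f := fun y => g y / 2 - y / 2) ?_ ?_ ?_
    · intro x _
      have := ((hasDerivAt_g x).div_const 2).sub ((hasDerivAt_id x).div_const 2)
      exact this.congr_deriv (by ring)
    · refine (hD.integrableOn).congr_fun (fun y hy => ?_) measurableSet_Ioi
      simp only [P1, P3]
      rw [Set.indicator_of_mem hy, Set.indicator_of_mem hy]
      ring
    · have := tendsto_g_sub_atTop.div_const 2
      refine (by simpa using this : Tendsto (fun y => (g y - y) / 2) atTop (nhds 0)).congr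
        fun y => by ring
  have := intervalIntegral.integral_Iic_add_Ioi (b := (0:ℝ)) (hD.integrableOn) (hD.integrableOn)
  rw [← this, hIic, hIoi]
  ring

theorem integral_I3_eq_I :
    Integrable (fun y : ℝ => y * Real.exp (-y ^ 2) / (Real.sqrt π * erfc y) -
      Set.indicator (Set.Ioi (0 : ℝ)) (fun y => y ^ 2 + 1 / 2) y) ∧
    Integrable (fun y : ℝ => (Real.exp (-y ^ 2) / (Real.sqrt π * erfc y)) ^ 2 -
      Set.indicator (Set.Ioi (0 : ℝ)) (fun y => y ^ 2 + 1) y) ∧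
    (∫ y : ℝ, ((Real.exp (-y ^ 2) / (Real.sqrt π * erfc y)) ^ 2 -
        Set.indicator (Set.Ioi (0 : ℝ)) (fun y => y ^ 2 + 1) y)) =
      ∫ y : ℝ, (y * Real.exp (-y ^ 2) / (Real.sqrt π * erfc y) -
        Set.indicator (Set.Ioi (0 : ℝ)) (fun y => y ^ 2 + 1 / 2) y) := by
  have h1 : (fun y : ℝ => y * Real.exp (-y ^ 2) / (Real.sqrt π * erfc y) -
      Set.indicator (Set.Ioi (0 : ℝ)) (fun y => y ^ 2 + 1 / 2) y) = P1 := by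
    funext y
    rw [P1, erfc_eq y, g, mul_div_assoc]
  have h3 : (fun y : ℝ => (Real.exp (-y ^ 2) / (Real.sqrt π * erfc y)) ^ 2 -
      Set.indicator (Set.Ioi (0 : ℝ)) (fun y => y ^ 2 + 1) y) = P3 := by
    funext y
    rw [P3, erfc_eq y, g]
  refine ⟨h1 ▸ int_P1, h3 ▸ int_P3, ?_⟩
  rw [h1, h3]
  have key := integral_D_eq_zero
  rw [integral_sub int_P3 int_P1] at key
  linarith
end

section
/- For every x > 0, ρ(x) := ∫_{−∞}^{∞} e^{−(y+x)²}/(√π erfc(y)) dy → +∞ as x → 0⁺. -/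
open Real MeasureTheory Filter

/-- The semi-hard edge density profile. -/
noncomputable def rhoProfile (x : ℝ) : ℝ :=
  ∫ y : ℝ, Real.exp (-(y + x) ^ 2) / (Real.sqrt π * erfc y)

namespace RhoAux

noncomputable def I (y : ℝ) : ℝ := ∫ t in Set.Ioi y, Real.exp (-t ^ 2)

lemma gauss_integrable : Integrable (fun t : ℝ => Real.exp (-t ^ 2)) := by
  simpa using integrable_exp_neg_mul_sq (by norm_num : (0:ℝ) < 1)

lemma tgauss_integrable : Integrable (fun t : ℝ => t * Real.exp (-t ^ 2)) := by
  simpa using integrable_mul_exp_neg_mul_sq (by norm_num : (0:ℝ) < 1)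

lemma I_pos (y : ℝ) : 0 < I y := by
  rw [I]
  rw [setIntegral_pos_iff_support_of_nonneg_ae
    (Filter.Eventually.of_forall fun t => (Real.exp_pos _).le)
    gauss_integrable.integrableOn]
  have hs : Function.support (fun t : ℝ => Real.exp (-t ^ 2)) = Set.univ := by
    ext t; simp [Real.exp_ne_zero]
  rw [hs, Set.univ_inter, Real.volume_Ioi]
  simp

lemma sqrt_pi_pos : 0 < Real.sqrt π := Real.sqrt_pos.2 Real.pi_pos

lemma sqrt_pi_mul_erfc (y : ℝ) : Real.sqrt π * erfc y = 2 * I y := by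
  rw [erfc, I]
  field_simp

lemma erfc_pos (y : ℝ) : 0 < erfc y := by
  have h := sqrt_pi_mul_erfc y
  nlinarith [I_pos y, sqrt_pi_pos]

lemma I_antitone : Antitone I := by
  intro a b hab
  exact setIntegral_mono_set gauss_integrable.integrableOn
    (Filter.Eventually.of_forall fun t => (Real.exp_pos _).le)
    (HasSubset.Subset.eventuallyLE (Set.Ioi_subset_Ioi hab))

lemma erfc_measurable : Measurable erfc :=
  measurable_const.mul (I_antitone.measurable)

lemma integral_tgauss (y : ℝ) :
    ∫ t in Set.Ioi y, t * Real.exp (-t ^ 2) = Real.exp (-y ^ 2) / 2 := by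
  have hderiv : ∀ t ∈ Set.Ici y,
      HasDerivAt (fun t : ℝ => -(Real.exp (-t ^ 2) / 2)) (t * Real.exp (-t ^ 2)) t := by
    intro t _
    have h1 : HasDerivAt (fun t : ℝ => -t ^ 2) (-(2 * t)) t := by
      simpa using (hasDerivAt_pow 2 t).fun_neg
    have h2 := (h1.exp.div_const 2).fun_neg
    refine h2.congr_deriv ?_
    ring
  have htend : Tendsto (fun t : ℝ => -(Real.exp (-t ^ 2) / 2)) atTop (nhds 0) := by
    have h1 : Tendsto (fun t : ℝ => -t ^ 2) atTop atBot :=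
      tendsto_neg_atTop_atBot.comp (tendsto_pow_atTop two_ne_zero)
    have h2 := (Real.tendsto_exp_atBot.comp h1).div_const 2
    simpa using h2.neg
  have := integral_Ioi_of_hasDerivAt_of_tendsto' hderiv tgauss_integrable.integrableOn htend
  rw [this]
  ring

lemma I_le {y : ℝ} (hy : 1 ≤ y) : I y ≤ Real.exp (-y ^ 2) / (2 * y) := by
  have hy0 : 0 < y := lt_of_lt_of_le one_pos hy
  have h1 : I y ≤ ∫ t in Set.Ioi y, t * Real.exp (-t ^ 2) / y := by
    rw [I]
    refine setIntegral_mono_on gauss_integrable.integrableOn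
      (tgauss_integrable.div_const y).integrableOn measurableSet_Ioi ?_
    intro t ht
    rw [Set.mem_Ioi] at ht
    rw [le_div_iff₀ hy0]
    have := Real.exp_pos (-t ^ 2)
    nlinarith
  have h2 : ∫ t in Set.Ioi y, t * Real.exp (-t ^ 2) / y
      = (∫ t in Set.Ioi y, t * Real.exp (-t ^ 2)) / y := integral_div y _
  rw [h2, integral_tgauss] at h1
  calc I y ≤ Real.exp (-y ^ 2) / 2 / y := h1
    _ = Real.exp (-y ^ 2) / (2 * y) := by ring

lemma I_ge {y : ℝ} (hy : 1 ≤ y) :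
    Real.exp (-y ^ 2 - 2) / (2 * y) ≤ I y := by
  have hy0 : 0 < y := lt_of_lt_of_le one_pos hy
  have hδ : 0 < 1 / (2 * y) := by positivity
  have hsub : Set.Ioc y (y + 1 / (2 * y)) ⊆ Set.Ioi y := Set.Ioc_subset_Ioi_self
  have h1 : ∫ t in Set.Ioc y (y + 1 / (2 * y)), Real.exp (-t ^ 2) ≤ I y := by
    rw [I]
    exact setIntegral_mono_set gauss_integrable.integrableOn
      (Filter.Eventually.of_forall fun t => (Real.exp_pos _).le)
      (HasSubset.Subset.eventuallyLE hsub)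
  refine le_trans ?_ h1
  have h2 : Real.exp (-y ^ 2 - 2) * (volume (Set.Ioc y (y + 1 / (2 * y)))).toReal
      ≤ ∫ t in Set.Ioc y (y + 1 / (2 * y)), Real.exp (-t ^ 2) := by
    refine setIntegral_ge_of_const_le_real measurableSet_Ioc (by simp) ?_
      gauss_integrable.integrableOn
    intro t ht
    rw [Real.exp_le_exp]
    rcases ht with ⟨ht1, ht2⟩
    have h4 : t ^ 2 ≤ (y + 1 / (2 * y)) ^ 2 := by
      have : 0 < t := lt_trans hy0 ht1
      nlinarith
    have h5 : (y + 1 / (2 * y)) ^ 2 ≤ y ^ 2 + 2 := by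
      have hy2 : 1 ≤ y ^ 2 := by nlinarith
      have : (y + 1 / (2 * y)) ^ 2 = y ^ 2 + 1 + 1 / (4 * y ^ 2) := by
        field_simp; ring
      rw [this]
      have : 1 / (4 * y ^ 2) ≤ 1 := by
        rw [div_le_one (by positivity)]; nlinarith
      linarith
    linarith
  rw [Real.volume_Ioc] at h2
  have hvol : (ENNReal.ofReal (y + 1 / (2 * y) - y)).toReal = 1 / (2 * y) := by
    rw [ENNReal.toReal_ofReal (by linarith)]
    ring
  rw [hvol] at h2
  calc Real.exp (-y ^ 2 - 2) / (2 * y) = Real.exp (-y ^ 2 - 2) * (1 / (2 * y)) := by ring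
    _ ≤ _ := h2

lemma f_nonneg (x y : ℝ) : 0 ≤ Real.exp (-(y + x) ^ 2) / (Real.sqrt π * erfc y) := by
  have := erfc_pos y
  have := sqrt_pi_pos
  positivity

lemma f_measurable (x : ℝ) :
    Measurable (fun y : ℝ => Real.exp (-(y + x) ^ 2) / (Real.sqrt π * erfc y)) := by
  apply Measurable.div
  · exact (((measurable_id.add_const x).pow_const 2).neg).exp
  · exact measurable_const.mul erfc_measurable

lemma f_integrable {x : ℝ} (hx : 0 < x) :
    Integrable (fun y : ℝ => Real.exp (-(y + x) ^ 2) / (Real.sqrt π * erfc y)) := by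
  rw [← integrableOn_univ, ← Set.Iic_union_Ioi (a := (1:ℝ)), integrableOn_union]
  constructor
  · -- on Iic 1 : bounded by shifted gaussian / (√π erfc 1)
    have hg : Integrable (fun y : ℝ => Real.exp (-(y + x) ^ 2) * (Real.sqrt π * erfc 1)⁻¹) :=
      (gauss_integrable.comp_add_right x).mul_const _
    refine Integrable.mono' hg.integrableOn ((f_measurable x).aestronglyMeasurable.restrict) ?_
    refine (ae_restrict_iff' measurableSet_Iic).2 (Filter.Eventually.of_forall ?_)
    intro y hy
    rw [Set.mem_Iic] at hy
    have h1 : erfc 1 ≤ erfc y := by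
      have := I_antitone hy
      have h := sqrt_pi_mul_erfc y
      have h' := sqrt_pi_mul_erfc 1
      nlinarith [sqrt_pi_pos]
    rw [Real.norm_eq_abs, abs_of_nonneg (f_nonneg x y), div_eq_mul_inv]
    have he1 : 0 < Real.sqrt π * erfc 1 := mul_pos sqrt_pi_pos (erfc_pos 1)
    have he2 : 0 < Real.sqrt π * erfc y := mul_pos sqrt_pi_pos (erfc_pos y)
    refine mul_le_mul_of_nonneg_left ?_ (Real.exp_pos _).le
    rw [inv_le_inv₀ he2 he1]
    exact mul_le_mul_of_nonneg_left h1 sqrt_pi_pos.le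
  · -- on Ioi 1 : bounded by (e²/x) exp(-x y)
    have hg : Integrable (fun y : ℝ => Real.exp 2 / x * Real.exp (-x * y))
        (volume.restrict (Set.Ioi 1)) := (exp_neg_integrableOn_Ioi 1 hx).const_mul _
    refine Integrable.mono' hg ((f_measurable x).aestronglyMeasurable.restrict) ?_
    refine (ae_restrict_iff' measurableSet_Ioi).2 (Filter.Eventually.of_forall ?_)
    intro y hy
    rw [Set.mem_Ioi] at hy
    have hy0 : (0:ℝ) < y := lt_trans one_pos hy
    rw [Real.norm_eq_abs, abs_of_nonneg (f_nonneg x y)]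
    have hIl := I_ge hy.le
    have hden : Real.exp (-y ^ 2 - 2) / y ≤ Real.sqrt π * erfc y := by
      rw [sqrt_pi_mul_erfc]
      calc Real.exp (-y ^ 2 - 2) / y = 2 * (Real.exp (-y ^ 2 - 2) / (2 * y)) := by
            field_simp
        _ ≤ 2 * I y := by linarith
    have hd0 : 0 < Real.exp (-y ^ 2 - 2) / y := by positivity
    have step1 : Real.exp (-(y + x) ^ 2) / (Real.sqrt π * erfc y)
        ≤ Real.exp (-(y + x) ^ 2) / (Real.exp (-y ^ 2 - 2) / y) :=
      div_le_div_of_nonneg_left (Real.exp_pos _).le hd0 hden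
    refine le_trans step1 ?_
    have heq : Real.exp (-(y + x) ^ 2) / (Real.exp (-y ^ 2 - 2) / y)
        = y * Real.exp (-(2 * x * y) - x ^ 2 + 2) := by
      rw [div_div_eq_mul_div, mul_comm, mul_div_assoc, ← Real.exp_sub]
      congr 2
      ring
    rw [heq]
    have key : y * Real.exp (-(2 * x * y) - x ^ 2 + 2)
        ≤ y * Real.exp (-x * y) * (Real.exp 2 * Real.exp (-x * y)) := by
      have h3 : Real.exp (-x * y) * (Real.exp 2 * Real.exp (-x * y))
          = Real.exp (-x * y + (2 + -x * y)) := by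
        rw [Real.exp_add, Real.exp_add]
      rw [mul_assoc y, h3]
      refine mul_le_mul_of_nonneg_left (Real.exp_le_exp.2 (by nlinarith)) hy0.le
    refine le_trans key ?_
    have hbd : y * Real.exp (-x * y) ≤ 1 / x := by
      rw [le_div_iff₀ hx, mul_comm (y * _) x, ← mul_assoc]
      have h1 : x * y ≤ Real.exp (x * y) := by linarith [Real.add_one_le_exp (x * y)]
      calc x * y * Real.exp (-x * y) ≤ Real.exp (x * y) * Real.exp (-x * y) :=
            mul_le_mul_of_nonneg_right h1 (Real.exp_pos _).le
        _ = 1 := by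
            rw [← Real.exp_add, show x * y + -x * y = 0 by ring, Real.exp_zero]
    calc y * Real.exp (-x * y) * (Real.exp 2 * Real.exp (-x * y))
        ≤ 1 / x * (Real.exp 2 * Real.exp (-x * y)) :=
          mul_le_mul_of_nonneg_right hbd (by positivity)
      _ = Real.exp 2 / x * Real.exp (-x * y) := by ring

lemma rho_lower {x : ℝ} (hx0 : 0 < x) (hx1 : x ≤ 1) :
    (x⁻¹ - 1) * Real.exp (-3) ≤ rhoProfile x := by
  have hint := f_integrable hx0
  have hx1' : (1:ℝ) ≤ x⁻¹ := by
    nlinarith [inv_pos.2 hx0, mul_inv_cancel₀ hx0.ne']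
  have h1 : ∫ y in Set.Icc 1 x⁻¹, Real.exp (-(y + x) ^ 2) / (Real.sqrt π * erfc y)
      ≤ rhoProfile x :=
    setIntegral_le_integral hint (Filter.Eventually.of_forall (f_nonneg x))
  refine le_trans ?_ h1
  have hpt : ∀ y ∈ Set.Icc 1 x⁻¹,
      Real.exp (-3) ≤ Real.exp (-(y + x) ^ 2) / (Real.sqrt π * erfc y) := by
    intro y hy
    rcases hy with ⟨hy1, hy2⟩
    have hy0 : (0:ℝ) < y := lt_of_lt_of_le one_pos hy1
    have hxy : x * y ≤ 1 := by
      calc x * y ≤ x * x⁻¹ := mul_le_mul_of_nonneg_left hy2 hx0.le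
        _ = 1 := mul_inv_cancel₀ hx0.ne'
    have hden : Real.sqrt π * erfc y ≤ Real.exp (-y ^ 2) / y := by
      rw [sqrt_pi_mul_erfc]
      calc 2 * I y ≤ 2 * (Real.exp (-y ^ 2) / (2 * y)) := by
            linarith [I_le hy1]
        _ = Real.exp (-y ^ 2) / y := by field_simp
    have hstep : Real.exp (-(y + x) ^ 2) / (Real.exp (-y ^ 2) / y)
        ≤ Real.exp (-(y + x) ^ 2) / (Real.sqrt π * erfc y) :=
      div_le_div_of_nonneg_left (Real.exp_pos _).le
        (mul_pos sqrt_pi_pos (erfc_pos y)) hden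
    refine le_trans ?_ hstep
    have heq : Real.exp (-(y + x) ^ 2) / (Real.exp (-y ^ 2) / y)
        = y * Real.exp (-(2 * x * y) - x ^ 2) := by
      rw [div_div_eq_mul_div, mul_comm, mul_div_assoc, ← Real.exp_sub]
      congr 2
      ring
    rw [heq]
    calc Real.exp (-3) = 1 * Real.exp (-3) := (one_mul _).symm
      _ ≤ y * Real.exp (-(2 * x * y) - x ^ 2) := by
          refine mul_le_mul hy1 (Real.exp_le_exp.2 ?_) (Real.exp_pos _).le hy0.le
          nlinarith
  have h2 := setIntegral_ge_of_const_le_real (c := Real.exp (-3)) measurableSet_Icc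
    (measure_Icc_lt_top).ne hpt hint.integrableOn
  rw [measureReal_def, Real.volume_Icc, ENNReal.toReal_ofReal (by linarith)] at h2
  calc (x⁻¹ - 1) * Real.exp (-3) = Real.exp (-3) * (x⁻¹ - 1) := mul_comm _ _
    _ ≤ _ := h2

end RhoAux

theorem rhoProfile_tendsto_atTop_at_zero :
    Tendsto rhoProfile (nhdsWithin 0 (Set.Ioi 0)) atTop := by
  have h1 : Tendsto (fun x : ℝ => (x⁻¹ - 1) * Real.exp (-3))
      (nhdsWithin 0 (Set.Ioi 0)) atTop := by
    refine Tendsto.atTop_mul_const (Real.exp_pos _) ?_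
    have := tendsto_atTop_add_const_right (nhdsWithin (0:ℝ) (Set.Ioi 0)) (-1)
      tendsto_inv_nhdsGT_zero
    simpa [sub_eq_add_neg] using this
  refine tendsto_atTop_mono' _ ?_ h1
  filter_upwards [Ioc_mem_nhdsGT_of_mem
    (by norm_num : (0:ℝ) ∈ Set.Ico 0 1)] with x hx
  exact RhoAux.rho_lower hx.1 hx.2
end

section
/- Define Φ(z) := (1/√(2π)) ∫_{−∞}^{∞} e^{−(z−t)²/2} / ( (1/2) erfc(t/√2) ) dt for Re z < 0. Then the integral converges absolutely for every z with Re z < 0, Φ is analytic on the left half-plane, Φ(x) → 1 as x → −∞ along the real axis, and Φ(x) → +∞ as x → 0⁻ along the real axis. -/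
open Real MeasureTheory Filter Complex

/-- The universal semi-hard edge profile function
`Φ(z) = (1/√(2π)) ∫ℝ e^{-(z-t)²/2} / ((1/2) erfc(t/√2)) dt`. -/
noncomputable def PhiProfile (z : ℂ) : ℂ :=
  (1 / Real.sqrt (2 * π)) *
    ∫ t : ℝ, Complex.exp (-(z - t) ^ 2 / 2) / ((erfc (t / Real.sqrt 2) / 2 : ℝ) : ℂ)

namespace PhiAux

noncomputable def Ig (y : ℝ) : ℝ := ∫ s in Set.Ioi y, Real.exp (-s ^ 2)

noncomputable def Fb (t : ℝ) : ℝ := erfc (t / Real.sqrt 2) / 2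

lemma intExp : Integrable (fun s : ℝ => Real.exp (-s ^ 2)) := by
  simpa using integrable_exp_neg_mul_sq (one_pos)

lemma intExp2 : Integrable (fun s : ℝ => Real.exp (-s ^ 2 / 2)) := by
  have := integrable_exp_neg_mul_sq (show (0:ℝ) < 1/2 by norm_num)
  refine this.congr' (Continuous.aestronglyMeasurable (by continuity)) (Eventually.of_forall fun s => ?_)
  ring_nf

lemma Ig_pos (y : ℝ) : 0 < Ig y := by
  have h : IntegrableOn (fun s : ℝ => Real.exp (-s ^ 2)) (Set.Ioi y) := intExp.integrableOn
  rw [Ig, setIntegral_pos_iff_support_of_nonneg_ae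
    (Eventually.of_forall fun s => (Real.exp_pos _).le) h]
  have : (Function.support fun s : ℝ => Real.exp (-s ^ 2)) = Set.univ := by
    ext s; simp [Function.support, (Real.exp_pos (-s ^ 2)).ne']
  rw [this, Set.univ_inter]
  simp [Real.volume_Ioi]

lemma Ig_le (y : ℝ) : Ig y ≤ Real.sqrt π := by
  have h := setIntegral_le_integral (s := Set.Ioi y) intExp (Eventually.of_forall fun s => (Real.exp_pos (-s^2)).le)
  have h2 : ∫ s : ℝ, Real.exp (-s ^ 2) = Real.sqrt π := by
    have := integral_gaussian 1
    simpa using this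
  rw [Ig]; rw [h2] at h; exact h

lemma Ig_antitone : Antitone Ig := by
  intro a b hab
  exact setIntegral_mono_set intExp.integrableOn
    (Eventually.of_forall fun s => (Real.exp_pos _).le)
    (HasSubset.Subset.eventuallyLE (Set.Ioi_subset_Ioi hab))

lemma Ig_upper {y : ℝ} (hy : 0 ≤ y) : Ig y ≤ Real.sqrt π * Real.exp (-y ^ 2) := by
  have hint : Integrable (fun s : ℝ => Real.exp (-y ^ 2) * Real.exp (-(s - y) ^ 2)) :=
    (intExp.comp_sub_right y).const_mul _
  have h1 : Ig y ≤ ∫ s in Set.Ioi y, Real.exp (-y ^ 2) * Real.exp (-(s - y) ^ 2) := by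
    refine setIntegral_mono_on intExp.integrableOn hint.integrableOn measurableSet_Ioi ?_
    intro s hs
    rw [← Real.exp_add, Real.exp_le_exp]
    nlinarith [Set.mem_Ioi.mp hs]
  have h2 : (∫ s in Set.Ioi y, Real.exp (-y ^ 2) * Real.exp (-(s - y) ^ 2))
      ≤ ∫ s : ℝ, Real.exp (-y ^ 2) * Real.exp (-(s - y) ^ 2) :=
    setIntegral_le_integral hint
      (Eventually.of_forall fun s => by positivity)
  have h3 : (∫ s : ℝ, Real.exp (-y ^ 2) * Real.exp (-(s - y) ^ 2))
      = Real.exp (-y ^ 2) * Real.sqrt π := by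
    rw [integral_const_mul, integral_sub_right_eq_self (fun s => Real.exp (-s ^ 2)) y]
    have := integral_gaussian 1
    simp only [neg_mul, one_mul] at this
    rw [this]; norm_num
  rw [h3] at h2
  rw [mul_comm]
  exact h1.trans h2

lemma Ig_lower {y δ : ℝ} (hy : 0 ≤ y) (hδ : 0 < δ) :
    δ * Real.exp (-(y + δ) ^ 2) ≤ Ig y := by
  have h1 : (∫ _ in Set.Ioc y (y + δ), Real.exp (-(y + δ) ^ 2))
      ≤ ∫ s in Set.Ioc y (y + δ), Real.exp (-s ^ 2) := by
    refine setIntegral_mono_on ((integrableOn_const_iff (C := Real.exp (-(y + δ) ^ 2))).mpr (Or.inr ?_))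
      (intExp.integrableOn) measurableSet_Ioc ?_
    · rw [Real.volume_Ioc]; exact ENNReal.ofReal_lt_top
    · intro s hs
      rw [Real.exp_le_exp]
      rcases Set.mem_Ioc.mp hs with ⟨h1, h2⟩
      nlinarith
  have h2 : (∫ s in Set.Ioc y (y + δ), Real.exp (-s ^ 2)) ≤ Ig y :=
    setIntegral_mono_set intExp.integrableOn
      (Eventually.of_forall fun s => (Real.exp_pos _).le)
      (HasSubset.Subset.eventuallyLE Set.Ioc_subset_Ioi_self)
  have h3 : (∫ _ in Set.Ioc y (y + δ), Real.exp (-(y + δ) ^ 2))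
      = δ * Real.exp (-(y + δ) ^ 2) := by
    rw [setIntegral_const, Real.volume_real_Ioc_of_le (by linarith), smul_eq_mul]
    congr 1
    ring
  rw [h3] at h1
  exact h1.trans h2

lemma Ig_zero : Ig 0 = Real.sqrt π / 2 := by
  have := integral_gaussian_Ioi 1
  simpa [Ig] using this

lemma Ig_tail {y : ℝ} (hy : y ≤ -1) : Real.sqrt π - Real.exp y ≤ Ig y := by
  have hsplit := intervalIntegral.integral_Iic_add_Ioi
    (f := fun s : ℝ => Real.exp (-s ^ 2)) (b := y) (μ := volume)
    intExp.integrableOn intExp.integrableOn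
  have htot : ∫ s : ℝ, Real.exp (-s ^ 2) = Real.sqrt π := by
    have := integral_gaussian 1
    simpa using this
  have hIic : (∫ s in Set.Iic y, Real.exp (-s ^ 2)) ≤ Real.exp y := by
    have h1 : (∫ s in Set.Iic y, Real.exp (-s ^ 2)) ≤ ∫ s in Set.Iic y, Real.exp s := by
      refine setIntegral_mono_on intExp.integrableOn (integrableOn_exp_Iic y)
        measurableSet_Iic ?_
      intro s hs
      rw [Real.exp_le_exp]
      have hs' : s ≤ y := hs
      nlinarith [hs'.trans hy]
    rwa [integral_exp_Iic] at h1
  rw [htot] at hsplit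
  rw [Ig]
  linarith [hsplit, hIic]

lemma Fb_eq (t : ℝ) : Fb t = Ig (t / Real.sqrt 2) / Real.sqrt π := by
  have hπ : Real.sqrt π ≠ 0 := by positivity
  rw [Fb, erfc, Ig]
  field_simp

lemma Fb_pos (t : ℝ) : 0 < Fb t := by
  rw [Fb_eq]
  exact div_pos (Ig_pos _) (Real.sqrt_pos.mpr Real.pi_pos)

lemma Fb_le_one (t : ℝ) : Fb t ≤ 1 := by
  rw [Fb_eq, div_le_one (Real.sqrt_pos.mpr Real.pi_pos)]
  exact Ig_le _

lemma Fb_antitone : Antitone Fb := by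
  intro a b hab
  rw [Fb_eq, Fb_eq]
  have h : a / Real.sqrt 2 ≤ b / Real.sqrt 2 :=
    div_le_div_of_nonneg_right hab (Real.sqrt_nonneg 2)
  exact div_le_div_of_nonneg_right (Ig_antitone h) (Real.sqrt_pos.mpr Real.pi_pos).le

lemma Fb_left {t : ℝ} (ht : t ≤ 0) : 1 / 2 ≤ Fb t := by
  rw [Fb_eq]
  have h1 : Ig 0 ≤ Ig (t / Real.sqrt 2) := by
    apply Ig_antitone
    apply div_nonpos_of_nonpos_of_nonneg ht (Real.sqrt_nonneg 2)
  rw [Ig_zero] at h1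
  rw [le_div_iff₀ (Real.sqrt_pos.mpr Real.pi_pos)]
  linarith

lemma Fb_upper {t : ℝ} (ht : 0 ≤ t) : Fb t ≤ Real.exp (-t ^ 2 / 2) := by
  rw [Fb_eq]
  have h2 : (0:ℝ) ≤ t / Real.sqrt 2 := div_nonneg ht (Real.sqrt_nonneg 2)
  have h1 := Ig_upper h2
  have hsq : (t / Real.sqrt 2) ^ 2 = t ^ 2 / 2 := by
    rw [div_pow, Real.sq_sqrt (by norm_num : (0:ℝ) ≤ 2)]
  rw [hsq] at h1
  rw [div_le_iff₀ (Real.sqrt_pos.mpr Real.pi_pos)]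
  rw [neg_div] at *
  linarith [h1, mul_comm (Real.sqrt π) (Real.exp (-(t^2/2)))]

lemma Fb_lower {t η : ℝ} (ht : 0 ≤ t) (hη : 0 < η) :
    η / Real.sqrt (2 * π) * Real.exp (-(t + η) ^ 2 / 2) ≤ Fb t := by
  rw [Fb_eq]
  have h2 : (0:ℝ) ≤ t / Real.sqrt 2 := div_nonneg ht (Real.sqrt_nonneg 2)
  have hδ : 0 < η / Real.sqrt 2 := div_pos hη (Real.sqrt_pos.mpr two_pos)
  have h1 := Ig_lower h2 hδ
  have hsq : (t / Real.sqrt 2 + η / Real.sqrt 2) ^ 2 = (t + η) ^ 2 / 2 := by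
    rw [← add_div, div_pow, Real.sq_sqrt (by norm_num : (0:ℝ) ≤ 2)]
  rw [hsq] at h1
  have hs2 : Real.sqrt (2 * π) = Real.sqrt 2 * Real.sqrt π :=
    Real.sqrt_mul (by norm_num) π
  rw [le_div_iff₀ (Real.sqrt_pos.mpr Real.pi_pos), hs2]
  have : η / (Real.sqrt 2 * Real.sqrt π) * Real.exp (-(t + η) ^ 2 / 2) * Real.sqrt π
      = η / Real.sqrt 2 * Real.exp (-(t + η) ^ 2 / 2) := by
    field_simp
  rw [this]
  convert h1 using 2
  congr 1; ring

lemma Fb_tendsto : Tendsto Fb atBot (nhds 1) := by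
  have hπ : 0 < Real.sqrt π := Real.sqrt_pos.mpr Real.pi_pos
  have hlow : Tendsto (fun t : ℝ => 1 - Real.exp (t / Real.sqrt 2) / Real.sqrt π)
      atBot (nhds 1) := by
    have h1 : Tendsto (fun t : ℝ => t / Real.sqrt 2) atBot atBot :=
      tendsto_id.atBot_div_const (Real.sqrt_pos.mpr two_pos)
    have h2 : Tendsto (fun t : ℝ => Real.exp (t / Real.sqrt 2) / Real.sqrt π)
        atBot (nhds 0) := by
      have := (Real.tendsto_exp_atBot.comp h1).div_const (Real.sqrt π)
      simpa using this
    have := (tendsto_const_nhds : Tendsto (fun _ : ℝ => (1:ℝ)) atBot (nhds 1)).sub h2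
    simpa using this
  refine tendsto_of_tendsto_of_tendsto_of_le_of_le' hlow tendsto_const_nhds ?_ ?_
  · filter_upwards [eventually_le_atBot (-Real.sqrt 2)] with t ht
    have ht2 : t / Real.sqrt 2 ≤ -1 := by
      rw [div_le_iff₀ (Real.sqrt_pos.mpr two_pos)]
      have := Real.sqrt_pos.mpr (show (0:ℝ) < 2 by norm_num)
      nlinarith
    have h1 := Ig_tail ht2
    rw [Fb_eq]
    rw [le_div_iff₀ hπ]
    have h2 : (1 - Real.exp (t / Real.sqrt 2) / Real.sqrt π) * Real.sqrt π
        = Real.sqrt π - Real.exp (t / Real.sqrt 2) := by field_simp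
    rw [h2]
    exact h1
  · exact Eventually.of_forall fun t => Fb_le_one t

noncomputable def Kern (z : ℂ) (t : ℝ) : ℂ :=
  Complex.exp (-(z - t) ^ 2 / 2) / ((erfc (t / Real.sqrt 2) / 2 : ℝ) : ℂ)

lemma Fb_meas : Measurable Fb := Fb_antitone.measurable

lemma Kern_eq (z : ℂ) (t : ℝ) :
    Kern z t = Complex.exp (-(z - t) ^ 2 / 2) / ((Fb t : ℝ) : ℂ) := rfl

lemma Kern_meas (z : ℂ) : AEStronglyMeasurable (Kern z) volume := by
  have h1 : Continuous fun t : ℝ => Complex.exp (-(z - t) ^ 2 / 2) := by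
    apply Continuous.cexp
    exact (((continuous_const.sub Complex.continuous_ofReal).pow 2).neg).div_const 2
  have h2 : Measurable fun t : ℝ => ((Fb t : ℝ) : ℂ) :=
    Complex.measurable_ofReal.comp Fb_meas
  exact ((h1.measurable.div h2)).aestronglyMeasurable

lemma norm_Kern (z : ℂ) (t : ℝ) :
    ‖Kern z t‖ = Real.exp ((z.im ^ 2 - (z.re - t) ^ 2) / 2) / Fb t := by
  rw [Kern_eq, norm_div, Complex.norm_exp, Complex.norm_real,
    Real.norm_eq_abs, abs_of_pos (Fb_pos t)]
  congr 2
  simp [Complex.div_re, Complex.normSq_apply, Complex.sub_re, Complex.sub_im, pow_two,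
    Complex.mul_re, Complex.mul_im]

lemma bound_neg {R : ℝ} (z : ℂ) (hzR : ‖z‖ ≤ R) {t : ℝ} (ht : t ≤ 0) :
    ‖Kern z t‖ ≤ 2 * Real.exp (R ^ 2 / 2) * Real.exp (R * (-t) - t ^ 2 / 2) := by
  rw [norm_Kern]
  have hre : |z.re| ≤ R := (Complex.abs_re_le_norm z).trans hzR
  have him : |z.im| ≤ R := (Complex.abs_im_le_norm z).trans hzR
  have h2 : (z.im ^ 2 - (z.re - t) ^ 2) / 2 ≤ R ^ 2 / 2 + (R * (-t) - t ^ 2 / 2) := by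
    have hy2 : z.im ^ 2 ≤ R ^ 2 := sq_le_sq' (abs_le.mp him).1 (abs_le.mp him).2
    have hxt : z.re * t ≤ R * (-t) := by
      nlinarith [(abs_le.mp hre).1, neg_nonneg.mpr ht]
    nlinarith [sq_nonneg z.re]
  calc Real.exp ((z.im ^ 2 - (z.re - t) ^ 2) / 2) / Fb t
      ≤ Real.exp ((z.im ^ 2 - (z.re - t) ^ 2) / 2) / (1 / 2) :=
        div_le_div_of_nonneg_left (Real.exp_pos _).le (by norm_num) (Fb_left ht)
    _ = 2 * Real.exp ((z.im ^ 2 - (z.re - t) ^ 2) / 2) := by ring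
    _ ≤ 2 * Real.exp (R ^ 2 / 2 + (R * (-t) - t ^ 2 / 2)) := by
        have := Real.exp_le_exp.mpr h2
        linarith
    _ = 2 * Real.exp (R ^ 2 / 2) * Real.exp (R * (-t) - t ^ 2 / 2) := by
        rw [Real.exp_add]; ring

lemma bound_pos {b R : ℝ} (hb : 0 < b) (z : ℂ) (hz : z.re ≤ -2 * b) (hzR : ‖z‖ ≤ R)
    {t : ℝ} (ht : 0 ≤ t) :
    ‖Kern z t‖ ≤ Real.sqrt (2 * π) / b * Real.exp (R ^ 2 / 2 + b ^ 2 / 2)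
      * Real.exp (-b * t) := by
  rw [norm_Kern]
  have him : |z.im| ≤ R := (Complex.abs_im_le_norm z).trans hzR
  have hFb := Fb_lower ht hb
  have hden : 0 < b / Real.sqrt (2 * π) * Real.exp (-(t + b) ^ 2 / 2) := by positivity
  have hs2π : 0 < Real.sqrt (2 * π) := Real.sqrt_pos.mpr (by positivity)
  calc Real.exp ((z.im ^ 2 - (z.re - t) ^ 2) / 2) / Fb t
      ≤ Real.exp ((z.im ^ 2 - (z.re - t) ^ 2) / 2)
        / (b / Real.sqrt (2 * π) * Real.exp (-(t + b) ^ 2 / 2)) :=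
        div_le_div_of_nonneg_left (Real.exp_pos _).le hden hFb
    _ = Real.sqrt (2 * π) / b
        * Real.exp ((z.im ^ 2 - (z.re - t) ^ 2) / 2 + (t + b) ^ 2 / 2) := by
        have hB : -(t + b) ^ 2 / 2 = -((t + b) ^ 2 / 2) := by ring
        rw [hB, Real.exp_neg, Real.exp_add]
        field_simp [Real.exp_ne_zero]
    _ ≤ Real.sqrt (2 * π) / b * Real.exp (R ^ 2 / 2 + b ^ 2 / 2 + -b * t) := by
        have hy2 : z.im ^ 2 ≤ R ^ 2 := sq_le_sq' (abs_le.mp him).1 (abs_le.mp him).2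
        have key : (z.im ^ 2 - (z.re - t) ^ 2) / 2 + (t + b) ^ 2 / 2
            ≤ R ^ 2 / 2 + b ^ 2 / 2 + -b * t := by
          have hxb : (z.re + b) * t ≤ -b * t := by nlinarith
          nlinarith [sq_nonneg z.re]
        have := Real.exp_le_exp.mpr key
        have hpos : 0 ≤ Real.sqrt (2 * π) / b := by positivity
        exact mul_le_mul_of_nonneg_left this hpos
    _ = Real.sqrt (2 * π) / b * Real.exp (R ^ 2 / 2 + b ^ 2 / 2) * Real.exp (-b * t) := by
        rw [Real.exp_add]; ring

lemma int_lin_gauss (c : ℝ) : Integrable (fun t : ℝ => Real.exp (c * (-t) - t ^ 2 / 2)) := by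
  have h : Integrable (fun t : ℝ => Real.exp (c ^ 2 / 2) * Real.exp (-(t + c) ^ 2 / 2)) :=
    (intExp2.comp_add_right c).const_mul _
  refine h.congr (Eventually.of_forall fun t => ?_)
  dsimp only
  rw [← Real.exp_add]
  congr 1
  ring

lemma integrable_of_bounds {f : ℝ → ℂ} (hm : AEStronglyMeasurable f volume) {g₁ g₂ : ℝ → ℝ}
    (hg₁ : IntegrableOn g₁ (Set.Iic 0)) (hg₂ : IntegrableOn g₂ (Set.Ioi 0))
    (hb₁ : ∀ t : ℝ, t ≤ 0 → ‖f t‖ ≤ g₁ t) (hb₂ : ∀ t : ℝ, 0 < t → ‖f t‖ ≤ g₂ t) :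
    Integrable f := by
  have h1 : IntegrableOn f (Set.Iic 0) := by
    refine Integrable.mono' hg₁ hm.restrict ?_
    rw [ae_restrict_iff' measurableSet_Iic]
    exact Eventually.of_forall fun t ht => hb₁ t ht
  have h2 : IntegrableOn f (Set.Ioi 0) := by
    refine Integrable.mono' hg₂ hm.restrict ?_
    rw [ae_restrict_iff' measurableSet_Ioi]
    exact Eventually.of_forall fun t ht => hb₂ t ht
  have h3 := h1.union h2
  rw [Set.Iic_union_Ioi] at h3
  exact integrableOn_univ.mp h3

lemma part1 (z : ℂ) (hz : z.re < 0) : Integrable (Kern z) := by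
  set b : ℝ := -z.re / 2 with hbdef
  have hb : 0 < b := by simp [hbdef]; linarith
  set R : ℝ := ‖z‖ with hRdef
  refine integrable_of_bounds (Kern_meas z)
    (g₁ := fun t => 2 * Real.exp (R ^ 2 / 2) * Real.exp (R * (-t) - t ^ 2 / 2))
    (g₂ := fun t => Real.sqrt (2 * π) / b * Real.exp (R ^ 2 / 2 + b ^ 2 / 2)
      * Real.exp (-b * t)) ?_ ?_ ?_ ?_
  · exact ((int_lin_gauss R).const_mul _).integrableOn
  · exact (exp_neg_integrableOn_Ioi 0 hb).const_mul _
  · exact fun t ht => bound_neg z le_rfl ht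
  · exact fun t ht => bound_pos hb z (le_of_eq (by rw [hbdef]; ring)) le_rfl ht.le


lemma integrable_ite {a : ℝ} {g₁ g₂ : ℝ → ℝ} (hg₁ : IntegrableOn g₁ (Set.Iic a))
    (hg₂ : IntegrableOn g₂ (Set.Ioi a)) :
    Integrable (fun t : ℝ => if t ≤ a then g₁ t else g₂ t) := by
  have h1 : IntegrableOn (fun t : ℝ => if t ≤ a then g₁ t else g₂ t) (Set.Iic a) := by
    refine IntegrableOn.congr_fun hg₁ (fun t ht => ?_) measurableSet_Iic
    simp [Set.mem_Iic.mp ht]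
  have h2 : IntegrableOn (fun t : ℝ => if t ≤ a then g₁ t else g₂ t) (Set.Ioi a) := by
    refine IntegrableOn.congr_fun hg₂ (fun t ht => ?_) measurableSet_Ioi
    simp [not_le.mpr (Set.mem_Ioi.mp ht)]
  have h3 := h1.union h2
  rw [Set.Iic_union_Ioi] at h3
  exact integrableOn_univ.mp h3

lemma Kern_hasDeriv (t : ℝ) (z : ℂ) :
    HasDerivAt (fun z => Kern z t) (-(z - t) * Kern z t) z := by
  have h1 : HasDerivAt (fun z : ℂ => -(z - (t : ℂ)) ^ 2 / 2) (-(z - t)) z := by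
    have h := (((hasDerivAt_id z).sub_const (t : ℂ)).pow 2).neg.div_const 2
    refine h.congr_deriv ?_
    norm_num
    ring
  have h2 := (h1.cexp).div_const ((Fb t : ℝ) : ℂ)
  have h3 : (fun z : ℂ => Complex.exp (-(z - (t : ℂ)) ^ 2 / 2) / ((Fb t : ℝ) : ℂ))
      = fun z => Kern z t := by
    funext w; rw [Kern_eq]
  rw [h3] at h2
  refine h2.congr_deriv ?_
  rw [Kern_eq]
  ring

lemma part2core (z₀ : ℂ) (hz₀ : z₀.re < 0) :
    DifferentiableAt ℂ (fun z => ∫ t : ℝ, Kern z t) z₀ := by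
  set m : ℝ := -z₀.re with hmdef
  have hm : 0 < m := by simp only [hmdef]; linarith
  set ε : ℝ := m / 4 with hεdef
  have hε : 0 < ε := by positivity
  set b : ℝ := 3 * m / 8 with hbdef
  have hb : 0 < b := by positivity
  set R : ℝ := ‖z₀‖ + ε with hRdef
  have hR0 : 0 ≤ R := by positivity
  have hball : ∀ z ∈ Metric.ball z₀ ε, z.re ≤ -2 * b ∧ ‖z‖ ≤ R := by
    intro z hz
    rw [Metric.mem_ball, dist_eq_norm] at hz
    constructor
    · have h1 : z.re - z₀.re ≤ ‖z - z₀‖ := by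
        have := Complex.abs_re_le_norm (z - z₀)
        have h2 := (abs_le.mp this).2
        simpa [Complex.sub_re] using h2
      have h3 : z.re ≤ z₀.re + ε := by linarith [hz.le]
      rw [hεdef, hmdef] at h3
      rw [hbdef, hmdef]
      linarith
    · calc ‖z‖ = ‖z₀ + (z - z₀)‖ := by ring_nf
        _ ≤ ‖z₀‖ + ‖z - z₀‖ := norm_add_le _ _
        _ ≤ R := by rw [hRdef]; linarith [hz.le]
  set C₁ : ℝ := 2 * (R + 1) * Real.exp (R ^ 2 / 2) with hC₁
  set C₂ : ℝ := (R + 8 / m) * (Real.sqrt (2 * π) / b * Real.exp (R ^ 2 / 2 + b ^ 2 / 2))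
    with hC₂
  have key := hasDerivAt_integral_of_dominated_loc_of_deriv_le (μ := volume)
    (F := fun (z : ℂ) (t : ℝ) => Kern z t)
    (F' := fun (z : ℂ) (t : ℝ) => -(z - t) * Kern z t) (x₀ := z₀)
    (bound := fun t : ℝ => if t ≤ 0 then C₁ * Real.exp ((R + 1) * (-t) - t ^ 2 / 2)
      else C₂ * Real.exp (-(m / 4) * t)) (Metric.ball_mem_nhds z₀ hε)
    (Eventually.of_forall fun z => Kern_meas z) (part1 z₀ hz₀)
    ?_ ?_ ?_ ?_
  · exact key.2.differentiableAt
  · exact ((continuous_const.sub Complex.continuous_ofReal).neg.aestronglyMeasurable).mul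
      (Kern_meas z₀)
  · refine Eventually.of_forall fun t => fun z hz => ?_
    obtain ⟨hzre, hzR⟩ := hball z hz
    have hnorm : ‖-(z - (t : ℂ)) * Kern z t‖ ≤ (R + |t|) * ‖Kern z t‖ := by
      rw [norm_mul, norm_neg]
      have : ‖z - (t : ℂ)‖ ≤ R + |t| := by
        calc ‖z - (t : ℂ)‖ ≤ ‖z‖ + ‖(t : ℂ)‖ := norm_sub_le _ _
          _ = ‖z‖ + |t| := by rw [Complex.norm_real, Real.norm_eq_abs]
          _ ≤ R + |t| := by linarith
      exact mul_le_mul_of_nonneg_right this (norm_nonneg _)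
    by_cases ht : t ≤ 0
    · rw [if_pos ht]
      have hK := bound_neg z hzR ht
      have hfac : R + |t| ≤ (R + 1) * Real.exp (-t) := by
        have h1 : -t ≤ Real.exp (-t) := by linarith [Real.add_one_le_exp (-t)]
        have h2 : (1 : ℝ) ≤ Real.exp (-t) := by
          rw [Real.one_le_exp_iff]; linarith
        rw [abs_of_nonpos ht]
        nlinarith
      calc ‖-(z - (t : ℂ)) * Kern z t‖ ≤ (R + |t|) * ‖Kern z t‖ := hnorm
        _ ≤ ((R + 1) * Real.exp (-t)) * (2 * Real.exp (R ^ 2 / 2)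
            * Real.exp (R * (-t) - t ^ 2 / 2)) := by
            apply mul_le_mul hfac hK (norm_nonneg _)
            positivity
        _ = C₁ * Real.exp ((R + 1) * (-t) - t ^ 2 / 2) := by
            rw [hC₁, show (R + 1) * (-t) - t ^ 2 / 2 = (-t) + (R * (-t) - t ^ 2 / 2) by ring,
              Real.exp_add]
            ring
    · rw [if_neg ht]
      push_neg at ht
      have hK := bound_pos hb z hzre hzR ht.le
      have hfac : R + |t| ≤ (R + 8 / m) * Real.exp (m / 8 * t) := by
        have h1 : m / 8 * t ≤ Real.exp (m / 8 * t) := by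
          linarith [Real.add_one_le_exp (m / 8 * t)]
        have h2 : (1 : ℝ) ≤ Real.exp (m / 8 * t) := by
          rw [Real.one_le_exp_iff]; positivity
        rw [abs_of_pos ht]
        have h3 : t ≤ 8 / m * Real.exp (m / 8 * t) := by
          rw [div_mul_eq_mul_div, le_div_iff₀ hm]
          nlinarith
        nlinarith
      calc ‖-(z - (t : ℂ)) * Kern z t‖ ≤ (R + |t|) * ‖Kern z t‖ := hnorm
        _ ≤ ((R + 8 / m) * Real.exp (m / 8 * t)) * (Real.sqrt (2 * π) / b
            * Real.exp (R ^ 2 / 2 + b ^ 2 / 2) * Real.exp (-b * t)) := by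
            apply mul_le_mul hfac hK (norm_nonneg _)
            positivity
        _ = C₂ * (Real.exp (m / 8 * t) * Real.exp (-b * t)) := by rw [hC₂]; ring
        _ = C₂ * Real.exp (-(m / 4) * t) := by
            rw [← Real.exp_add]
            congr 1
            rw [hbdef]
            ring
  · refine integrable_ite ?_ ?_
    · exact ((int_lin_gauss (R + 1)).const_mul C₁).integrableOn
    · exact (exp_neg_integrableOn_Ioi 0 (by positivity : (0:ℝ) < m / 4)).const_mul C₂
  · exact Eventually.of_forall fun t => fun z _ => Kern_hasDeriv t z

lemma part2 : AnalyticOn ℂ PhiProfile {z : ℂ | z.re < 0} := by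
  have hopen : IsOpen {z : ℂ | z.re < 0} := isOpen_lt Complex.continuous_re continuous_const
  refine DifferentiableOn.analyticOn ?_ hopen
  intro z hz
  have h1 : DifferentiableAt ℂ (fun z => ∫ t : ℝ, Kern z t) z := part2core z hz
  have h2 : PhiProfile = fun z => (1 / (Real.sqrt (2 * π) : ℂ)) * ∫ t : ℝ, Kern z t := rfl
  rw [h2]
  exact ((h1.const_mul _)).differentiableWithinAt

lemma Kern_real (x t : ℝ) :
    Kern (x : ℂ) t = ((Real.exp (-(x - t) ^ 2 / 2) / Fb t : ℝ) : ℂ) := by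
  rw [Kern_eq, Complex.ofReal_div, Complex.ofReal_exp]
  congr 2
  push_cast
  ring

noncomputable def Preal (x : ℝ) : ℝ := ∫ t : ℝ, Real.exp (-(x - t) ^ 2 / 2) / Fb t

lemma Phi_real (x : ℝ) :
    PhiProfile (x : ℂ) = ((1 / Real.sqrt (2 * π) * Preal x : ℝ) : ℂ) := by
  have h1 : (∫ t : ℝ, Kern (x : ℂ) t) = ((Preal x : ℝ) : ℂ) := by
    rw [show (∫ t : ℝ, Kern (x : ℂ) t)
        = ∫ t : ℝ, ((Real.exp (-(x - t) ^ 2 / 2) / Fb t : ℝ) : ℂ) from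
      integral_congr_ae (Eventually.of_forall fun t => Kern_real x t), Preal]
    exact integral_ofReal
  show (1 / (Real.sqrt (2 * π) : ℂ)) * (∫ t : ℝ, Kern (x : ℂ) t) = _
  rw [h1]
  push_cast
  ring

lemma P_shift (x : ℝ) : Preal x = ∫ s : ℝ, Real.exp (-s ^ 2 / 2) / Fb (x + s) := by
  rw [Preal, ← integral_add_left_eq_self (fun t => Real.exp (-(x - t) ^ 2 / 2) / Fb t) x]
  congr 1
  funext s
  have h : -(x - (x + s)) ^ 2 / 2 = -s ^ 2 / 2 := by ring
  simp only [h]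

lemma gauss_total : ∫ s : ℝ, Real.exp (-s ^ 2 / 2) = Real.sqrt (2 * π) := by
  have h := integral_gaussian (1 / 2)
  rw [show (π / (1 / 2 : ℝ)) = 2 * π by ring] at h
  calc ∫ s : ℝ, Real.exp (-s ^ 2 / 2) = ∫ s : ℝ, Real.exp (-(1 / 2) * s ^ 2) := by
        congr 1; funext s; congr 1; ring
    _ = Real.sqrt (2 * π) := h

lemma P_tendsto : Tendsto Preal atBot (nhds (Real.sqrt (2 * π))) := by
  have hmain : Tendsto (fun x : ℝ => ∫ s : ℝ, Real.exp (-s ^ 2 / 2) / Fb (x + s)) atBot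
      (nhds (∫ s : ℝ, Real.exp (-s ^ 2 / 2))) := by
    apply tendsto_integral_filter_of_dominated_convergence
      (bound := fun s : ℝ => if s ≤ 1 then 2 * Real.exp (-s ^ 2 / 2)
        else (2 * Real.sqrt (2 * π) * Real.exp (1 / 8)) * Real.exp (-(1 / 2) * s))
    · refine Eventually.of_forall fun x => ?_
      have hmeas : Measurable fun s : ℝ => Real.exp (-s ^ 2 / 2) / Fb (x + s) := by
        apply Measurable.div
        · exact (Real.continuous_exp.comp (by continuity)).measurable
        · exact Fb_meas.comp (measurable_const_add x)
      exact hmeas.aestronglyMeasurable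
    · filter_upwards [eventually_le_atBot (-1 : ℝ)] with x hx
      refine Eventually.of_forall fun s => ?_
      have hpos : 0 ≤ Real.exp (-s ^ 2 / 2) / Fb (x + s) :=
        div_nonneg (Real.exp_pos _).le (Fb_pos _).le
      rw [Real.norm_eq_abs, _root_.abs_of_nonneg hpos]
      by_cases hs : s ≤ 1
      · rw [if_pos hs]
        have h1 : (1 : ℝ) / 2 ≤ Fb (x + s) := Fb_left (by linarith)
        calc Real.exp (-s ^ 2 / 2) / Fb (x + s) ≤ Real.exp (-s ^ 2 / 2) / (1 / 2) :=
            div_le_div_of_nonneg_left (Real.exp_pos _).le (by norm_num) h1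
          _ = 2 * Real.exp (-s ^ 2 / 2) := by ring
      · rw [if_neg hs]
        push_neg at hs
        have h0 : (0 : ℝ) ≤ s - 1 := by linarith
        have h1 : Fb (x + s) ≥ Fb (s - 1) := Fb_antitone (by linarith)
        have h2 := Fb_lower h0 (show (0:ℝ) < 1/2 by norm_num)
        have h3 : (1 : ℝ) / 2 / Real.sqrt (2 * π) * Real.exp (-(s - 1 + 1 / 2) ^ 2 / 2)
            ≤ Fb (x + s) := le_trans h2 h1
        have hden : (0:ℝ) < 1 / 2 / Real.sqrt (2 * π) * Real.exp (-(s - 1 + 1 / 2) ^ 2 / 2) := by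
          have : (0:ℝ) < Real.sqrt (2 * π) := Real.sqrt_pos.mpr (by positivity)
          positivity
        calc Real.exp (-s ^ 2 / 2) / Fb (x + s)
            ≤ Real.exp (-s ^ 2 / 2)
              / (1 / 2 / Real.sqrt (2 * π) * Real.exp (-(s - 1 + 1 / 2) ^ 2 / 2)) :=
              div_le_div_of_nonneg_left (Real.exp_pos _).le hden h3
          _ = Real.exp (-s ^ 2 / 2 + (s - 1 + 1 / 2) ^ 2 / 2) / (1 / 2 / Real.sqrt (2 * π)) := by
              have hB : -(s - 1 + 1 / 2) ^ 2 / 2 = -((s - 1 + 1 / 2) ^ 2 / 2) := by ring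
              have h2π : (0:ℝ) < Real.sqrt (2 * π) := Real.sqrt_pos.mpr (by positivity)
              rw [hB, Real.exp_neg, Real.exp_add]
              field_simp
          _ = 2 * Real.sqrt (2 * π) * Real.exp (1 / 8) * Real.exp (-(1 / 2) * s) := by
              rw [show -s ^ 2 / 2 + (s - 1 + 1 / 2) ^ 2 / 2 = 1 / 8 + -(1 / 2) * s by ring,
                Real.exp_add]
              have h2π : (0:ℝ) < Real.sqrt (2 * π) := Real.sqrt_pos.mpr (by positivity)
              field_simp
    · refine integrable_ite ?_ ?_
      · exact (intExp2.const_mul 2).integrableOn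
      · exact (exp_neg_integrableOn_Ioi 1 (by norm_num : (0:ℝ) < 1/2)).const_mul _
    · refine Eventually.of_forall fun s => ?_
      have h1 : Tendsto (fun x : ℝ => Fb (x + s)) atBot (nhds 1) :=
        Fb_tendsto.comp (tendsto_atBot_add_const_right _ s tendsto_id)
      have h2 := Tendsto.div (tendsto_const_nhds :
        Tendsto (fun _ : ℝ => Real.exp (-s ^ 2 / 2)) atBot _) h1 one_ne_zero
      simpa [Pi.div_def] using h2
  rw [gauss_total] at hmain
  refine Tendsto.congr (fun x => (P_shift x).symm) hmain

lemma part3 : Tendsto (fun x : ℝ => PhiProfile x) atBot (nhds 1) := by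
  have h2π : (0:ℝ) < Real.sqrt (2 * π) := Real.sqrt_pos.mpr (by positivity)
  have h1 : Tendsto (fun x : ℝ => 1 / Real.sqrt (2 * π) * Preal x) atBot
      (nhds (1 / Real.sqrt (2 * π) * Real.sqrt (2 * π))) := P_tendsto.const_mul _
  rw [one_div_mul_cancel h2π.ne'] at h1
  have h2 := (Complex.continuous_ofReal.tendsto 1).comp h1
  refine Tendsto.congr (fun x => (Phi_real x).symm) ?_
  have h3 : Tendsto (fun x : ℝ => ((1 / Real.sqrt (2 * π) * Preal x : ℝ) : ℂ)) atBot
      (nhds ((1 : ℝ) : ℂ)) := h2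
  simpa using h3

lemma part4 : Tendsto (fun x : ℝ => ‖PhiProfile x‖) (nhdsWithin 0 (Set.Iio 0)) atTop := by
  have h2π : (0:ℝ) < Real.sqrt (2 * π) := Real.sqrt_pos.mpr (by positivity)
  set c : ℝ := Real.exp (-(3:ℝ) / 2) / Real.sqrt (2 * π) with hcdef
  have hc : 0 < c := by positivity
  have hbound : ∀ x : ℝ, -1 < x → x < 0 → c * (-x)⁻¹ ≤ ‖PhiProfile x‖ := by
    intro x hx1 hx0
    have hxc : ((x : ℂ)).re < 0 := by simpa using hx0
    have hxne : x ≠ 0 := ne_of_lt hx0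
    have hint : Integrable (fun t => Real.exp (-(x - t) ^ 2 / 2) / Fb t) := by
      have h := (part1 x hxc).norm
      refine h.congr (Eventually.of_forall fun t => ?_)
      dsimp only
      rw [norm_Kern]
      have he : ((x : ℂ).im ^ 2 - ((x : ℂ).re - t) ^ 2) / 2 = -(x - t) ^ 2 / 2 := by
        simp only [Complex.ofReal_im, Complex.ofReal_re]
        ring
      rw [he]
    set T : ℝ := (-x)⁻¹ with hTdef
    have hT : 0 < T := by
      rw [hTdef]
      exact inv_pos.mpr (by linarith)
    have h0 : ∀ t ∈ Set.Ioc 0 T, Real.exp (-(3:ℝ) / 2) ≤ Real.exp (-(x - t) ^ 2 / 2) / Fb t := by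
      rintro t ⟨ht0, htT⟩
      have h1 : Fb t ≤ Real.exp (-t ^ 2 / 2) := Fb_upper ht0.le
      have hxT : x * T = -1 := by
        rw [hTdef]
        field_simp
      calc Real.exp (-(3:ℝ) / 2)
          ≤ Real.exp (x * t - x ^ 2 / 2) := by
            rw [Real.exp_le_exp]
            have hxt : x * T ≤ x * t := mul_le_mul_of_nonpos_left htT hx0.le
            rw [hxT] at hxt
            have hx2 : x ^ 2 ≤ 1 := by nlinarith
            linarith
        _ = Real.exp (-(x - t) ^ 2 / 2) / Real.exp (-t ^ 2 / 2) := by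
            rw [← Real.exp_sub]
            congr 1
            ring
        _ ≤ Real.exp (-(x - t) ^ 2 / 2) / Fb t :=
            div_le_div_of_nonneg_left (Real.exp_pos _).le (Fb_pos t) h1
    have h2 : Real.exp (-(3:ℝ) / 2) * T ≤ Preal x := by
      have ha : (∫ _ in Set.Ioc 0 T, Real.exp (-(3:ℝ) / 2))
          ≤ ∫ t in Set.Ioc 0 T, Real.exp (-(x - t) ^ 2 / 2) / Fb t := by
        refine setIntegral_mono_on ((integrableOn_const_iff (C := Real.exp (-(3:ℝ) / 2))).mpr (Or.inr ?_))
          hint.integrableOn measurableSet_Ioc h0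
        rw [Real.volume_Ioc]; exact ENNReal.ofReal_lt_top
      have hb : (∫ t in Set.Ioc 0 T, Real.exp (-(x - t) ^ 2 / 2) / Fb t) ≤ Preal x :=
        setIntegral_le_integral hint
          (Eventually.of_forall fun t => div_nonneg (Real.exp_pos _).le (Fb_pos _).le)
      rw [setIntegral_const, Real.volume_real_Ioc_of_le (by linarith), smul_eq_mul] at ha
      rw [Preal]
      calc Real.exp (-(3:ℝ) / 2) * T = (T - 0) * Real.exp (-(3:ℝ) / 2) := by ring
        _ ≤ _ := le_trans ha hb
    rw [Phi_real x, Complex.norm_real, Real.norm_eq_abs]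
    calc c * (-x)⁻¹
        = 1 / Real.sqrt (2 * π) * (Real.exp (-(3:ℝ) / 2) * T) := by
          rw [hcdef, hTdef]; ring
      _ ≤ 1 / Real.sqrt (2 * π) * Preal x := by
          apply mul_le_mul_of_nonneg_left h2
          positivity
      _ ≤ |1 / Real.sqrt (2 * π) * Preal x| := le_abs_self _
  have hdiv : Tendsto (fun x : ℝ => c * (-x)⁻¹) (nhdsWithin 0 (Set.Iio 0)) atTop := by
    have h1 : Tendsto (fun x : ℝ => -x) (nhdsWithin (0:ℝ) (Set.Iio 0))
        (nhdsWithin (0:ℝ) (Set.Ioi 0)) := by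
      apply tendsto_nhdsWithin_of_tendsto_nhds_of_eventually_within
      · exact Tendsto.mono_left (by simpa using (continuous_neg.tendsto (0:ℝ)))
          nhdsWithin_le_nhds
      · filter_upwards [self_mem_nhdsWithin] with x hx
        simpa using Set.mem_Iio.mp hx
    exact Tendsto.const_mul_atTop hc (tendsto_inv_nhdsGT_zero.comp h1)
  refine tendsto_atTop_mono' _ ?_ hdiv
  filter_upwards [Ioo_mem_nhdsLT_of_mem
    (show (0:ℝ) ∈ Set.Ioc (-1 : ℝ) 0 by constructor <;> norm_num)] with x hx
  exact hbound x hx.1 hx.2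

end PhiAux

theorem PhiProfile_properties :
    (∀ z : ℂ, z.re < 0 →
      Integrable (fun t : ℝ =>
        Complex.exp (-(z - t) ^ 2 / 2) / ((erfc (t / Real.sqrt 2) / 2 : ℝ) : ℂ))) ∧
    AnalyticOn ℂ PhiProfile {z : ℂ | z.re < 0} ∧
    Tendsto (fun x : ℝ => PhiProfile x) atBot (nhds 1) ∧
    Tendsto (fun x : ℝ => ‖PhiProfile x‖) (nhdsWithin 0 (Set.Iio 0)) atTop :=
  ⟨fun z hz => PhiAux.part1 z hz, PhiAux.part2, PhiAux.part3, PhiAux.part4⟩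
end
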